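/- arXiv:2310.03519 — 6 statements merged into one kernel-verified Lean document; each statement's English description precedes it below -/
import Mathlib

section
/- Let α, β > -1 be real with β ≠ 0, and H_{α,β}(ξ) = β ∑_{n≥0} (-1)^n/(n+β) · C(α+1,n) ξ^n for |ξ|<1. Then (α+β+2)·H_{α+1,β}(ξ) = ξ(1-ξ)·H'_{α,β}(ξ) + (α+β+2-βξ)·H_{α,β}(ξ) for ξ ∈ (-1,1). -/
/-- Generalized binomial coefficient `C(a, n) = a (a-1) ⋯ (a-n+1) / n!`. -/
noncomputable def genBinom (a : ℝ) (n : ℕ) : ℝ :=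
  (∏ i ∈ Finset.range n, (a - i)) / n.factorial

/-- `H_{α,β}(ξ) = β ∑_{n≥0} (-1)^n/(n+β) C(α+1,n) ξ^n`. -/
noncomputable def Hab (α β : ℝ) (ξ : ℝ) : ℝ :=
  β * ∑' n : ℕ, ((-1) ^ n / (n + β)) * genBinom (α + 1) n * ξ ^ n

lemma genBinom_zero (a : ℝ) : genBinom a 0 = 1 := by simp [genBinom]

lemma genBinom_succ (a : ℝ) (n : ℕ) :
    ((n : ℝ) + 1) * genBinom a (n + 1) = (a - n) * genBinom a n := by
  have h1 : (n.factorial : ℝ) ≠ 0 := Nat.cast_ne_zero.mpr n.factorial_ne_zero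
  simp only [genBinom, Finset.prod_range_succ, Nat.factorial_succ]
  push_cast
  field_simp

lemma genBinom_pascal (a : ℝ) (n : ℕ) :
    genBinom (a + 1) (n + 1) = genBinom a (n + 1) + genBinom a n := by
  have h1 : (n.factorial : ℝ) ≠ 0 := Nat.cast_ne_zero.mpr n.factorial_ne_zero
  have hp : ∏ i ∈ Finset.range n, (a + 1 - ((i : ℕ) + 1 : ℕ)) =
      ∏ i ∈ Finset.range n, (a - i) := Finset.prod_congr rfl (fun i _ => by push_cast; ring)
  simp only [genBinom, Nat.factorial_succ]
  rw [Finset.prod_range_succ' (fun i => a + 1 - (i : ℕ)) n, hp, Finset.prod_range_succ]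
  push_cast
  field_simp
  ring

lemma genBinom_abs_le (a : ℝ) (k : ℕ) (hk : |a| ≤ k) :
    ∀ n : ℕ, |genBinom a n| ≤ ((n : ℝ) + 1) ^ k := by
  intro n
  induction n with
  | zero => simp [genBinom_zero]
  | succ m ih =>
    have hm1 : (0:ℝ) < (m:ℝ) + 1 := by positivity
    have hrec := genBinom_succ a m
    have hgb : genBinom a (m+1) = (a - m) * genBinom a m / ((m:ℝ) + 1) := by
      field_simp
      linarith [hrec]
    have habs : |genBinom a (m+1)| = |a - m| * |genBinom a m| / ((m:ℝ) + 1) := by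
      rw [hgb, abs_div, abs_mul, abs_of_pos hm1]
    have ham : |a - m| ≤ (k:ℝ) + m := by
      have := abs_sub_abs_le_abs_sub a (m:ℝ)
      have h2 : |a - (m:ℝ)| ≤ |a| + |(m:ℝ)| := abs_sub a (m:ℝ)
      have : |(m:ℝ)| = m := abs_of_nonneg (by positivity)
      calc |a - (m:ℝ)| ≤ |a| + |(m:ℝ)| := abs_sub a (m:ℝ)
        _ ≤ (k:ℝ) + m := by rw [this]; linarith
    -- Bernoulli
    have hx2 : (-2:ℝ) ≤ 1/((m:ℝ)+1) := by
      have : (0:ℝ) ≤ 1/((m:ℝ)+1) := by positivity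
      linarith
    have hb : 1 + (k:ℝ) * (1/((m:ℝ)+1)) ≤ (1 + 1/((m:ℝ)+1)) ^ k :=
      one_add_mul_le_pow hx2 k
    have he : (1 + 1/((m:ℝ)+1)) ^ k = ((m:ℝ)+2) ^ k / ((m:ℝ)+1) ^ k := by
      rw [← div_pow]; congr 1; field_simp; ring
    rw [he] at hb
    have hpowpos : (0:ℝ) < ((m:ℝ)+1) ^ k := by positivity
    have key2 : ((k:ℝ) + m) * ((m:ℝ)+1) ^ k ≤ ((m:ℝ)+1) * ((m:ℝ)+2) ^ k := by
      have := mul_le_mul_of_nonneg_right hb hpowpos.le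
      rw [div_mul_cancel₀ _ hpowpos.ne'] at this
      have h3 : (1 + (k:ℝ) * (1/((m:ℝ)+1))) * ((m:ℝ)+1) ^ k * ((m:ℝ)+1)
          = (((m:ℝ)+1) + k) * ((m:ℝ)+1) ^ k := by field_simp
      nlinarith [pow_nonneg (by positivity : (0:ℝ) ≤ (m:ℝ)+1) k]
    rw [habs]
    rw [div_le_iff₀ hm1]
    have hgnn : (0:ℝ) ≤ |genBinom a m| := abs_nonneg _
    have step1 : |a - m| * |genBinom a m| ≤ ((k:ℝ) + m) * ((m:ℝ)+1)^k := by
      apply mul_le_mul ham ih hgnn (by positivity)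
    calc |a - m| * |genBinom a m| ≤ ((k:ℝ) + m) * ((m:ℝ)+1)^k := step1
      _ ≤ ((m:ℝ)+1) * ((m:ℝ)+2)^k := key2
      _ = ((↑(m+1):ℝ)+1)^k * ((m:ℝ)+1) := by push_cast; ring

lemma summable_master (a : ℝ) {s : ℝ} (h0 : 0 < s) (h1 : s < 1) :
    Summable (fun n : ℕ => ((n : ℝ) + 1) * |genBinom a n| * s ^ n) := by
  obtain ⟨k, hk⟩ : ∃ k : ℕ, |a| ≤ k := ⟨⌈|a|⌉₊, Nat.le_ceil _⟩
  have hs : ‖s‖ < 1 := by rw [Real.norm_eq_abs, abs_of_pos h0]; exact h1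
  have h : Summable (fun n : ℕ => (n : ℝ) ^ (k + 1) * s ^ n) :=
    summable_pow_mul_geometric_of_norm_lt_one (k + 1) hs
  have h2 : Summable (fun n : ℕ => ((n + 1 : ℕ) : ℝ) ^ (k + 1) * s ^ (n + 1)) :=
    (summable_nat_add_iff (f := fun n : ℕ => (n : ℝ) ^ (k + 1) * s ^ n) 1).2 h
  have h3 := h2.mul_left (1 / s)
  have hpow : Summable (fun n : ℕ => ((n : ℝ) + 1) ^ (k + 1) * s ^ n) := by
    apply h3.congr
    intro n
    have hs0 : s ≠ 0 := h0.ne'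
    push_cast
    rw [pow_succ]
    field_simp
    ring
  apply Summable.of_norm_bounded hpow
  intro n
  have hb := genBinom_abs_le a k hk n
  have h4 : ‖((n : ℝ) + 1) * |genBinom a n| * s ^ n‖ = ((n : ℝ) + 1) * |genBinom a n| * s ^ n := by
    apply abs_of_nonneg; positivity
  rw [h4, pow_succ]
  calc ((n : ℝ) + 1) * |genBinom a n| * s ^ n ≤ ((n : ℝ) + 1) * ((n : ℝ) + 1) ^ k * s ^ n := by
        apply mul_le_mul_of_nonneg_right _ (by positivity)
        apply mul_le_mul_of_nonneg_left hb (by positivity)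
    _ = ((n : ℝ) + 1) ^ k * ((n : ℝ) + 1) * s ^ n := by ring

lemma summable_of_bound (a : ℝ) {r : ℝ} (hr0 : 0 < r) (hr1 : r < 1) (C : ℝ) (f : ℕ → ℝ)
    (hf : ∀ n, ‖f n‖ ≤ C * (((n : ℝ) + 1) * |genBinom a n| * r ^ n)) : Summable f :=
  Summable.of_norm_bounded ((summable_master a hr0 hr1).mul_left C) hf

lemma nβ_ne (β : ℝ) (hβ : -1 < β) (hβ0 : β ≠ 0) (n : ℕ) : ((n : ℝ) + β) ≠ 0 := by
  cases n with
  | zero => simpa using hβ0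
  | succ m =>
    have h0 : (0:ℝ) ≤ (m:ℝ) := Nat.cast_nonneg m
    have : (0:ℝ) < ((m+1:ℕ):ℝ) + β := by push_cast; linarith
    exact this.ne'

lemma D_le (β : ℝ) (hβ : -1 < β) (n : ℕ) : min |β| (1 + β) ≤ |(n : ℝ) + β| := by
  cases n with
  | zero => simpa using min_le_left |β| (1 + β)
  | succ m =>
    have h0 : (0:ℝ) ≤ (m:ℝ) := Nat.cast_nonneg m
    have h1 : (1:ℝ) + β ≤ ((m+1:ℕ):ℝ) + β := by push_cast; linarith
    calc min |β| (1+β) ≤ 1 + β := min_le_right _ _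
      _ ≤ ((m+1:ℕ):ℝ) + β := h1
      _ ≤ |((m+1:ℕ):ℝ) + β| := le_abs_self _

lemma abs_term_le (β : ℝ) (hβ : -1 < β) (hβ0 : β ≠ 0) (G : ℝ) (n : ℕ) :
    |(-1:ℝ) ^ n / ((n:ℝ) + β) * G| ≤ |G| / min |β| (1 + β) := by
  have hD0 : 0 < min |β| (1 + β) := lt_min (abs_pos.mpr hβ0) (by linarith)
  have hne := nβ_ne β hβ hβ0 n
  have habs : (0:ℝ) < |(n:ℝ) + β| := abs_pos.mpr hne
  rw [abs_mul, abs_div, abs_pow, abs_neg, abs_one, one_pow]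
  rw [div_mul_eq_mul_div, one_mul]
  rw [div_le_div_iff₀ habs hD0]
  have := D_le β hβ n
  have hG : (0:ℝ) ≤ |G| := abs_nonneg G
  nlinarith

/-- Abstract rearrangement of the power series identity. -/
lemma tsum_rearrange (c c' : ℕ → ℝ) (K b ξ : ℝ)
    (S0 : Summable (fun n : ℕ => c n * ξ ^ n))
    (Sn : Summable (fun n : ℕ => (n : ℝ) * c n * ξ ^ n))
    (Sb : Summable (fun n : ℕ => ((n : ℝ) + b) * c n * ξ ^ (n + 1)))
    (SK' : Summable (fun n : ℕ => K * (c' n * ξ ^ n)))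
    (hsx : Summable (fun n : ℕ => b * (c n * ξ ^ (n + 1))))
    (h0 : K * (c' 0 * ξ ^ 0) = K * (c 0 * ξ ^ 0))
    (hstep : ∀ n : ℕ, K * (c' (n + 1) * ξ ^ (n + 1)) =
        (((n : ℝ) + 1) + K) * c (n + 1) * ξ ^ (n + 1) - ((n : ℝ) + b) * c n * ξ ^ (n + 1)) :
    K * ∑' n : ℕ, c' n * ξ ^ n =
      ξ * (1 - ξ) * (∑' n : ℕ, c n * ((n : ℝ) * ξ ^ (n - 1))) +
        (K - b * ξ) * ∑' n : ℕ, c n * ξ ^ n := by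
  have SK : Summable (fun n : ℕ => K * (c n * ξ ^ n)) := S0.mul_left K
  have Sn1 : Summable (fun n : ℕ => (n : ℝ) * c n * ξ ^ (n + 1)) :=
    (Sn.mul_left ξ).congr (fun n => by ring)
  have SA : Summable (fun n : ℕ => ((n : ℝ) + K) * c n * ξ ^ n) :=
    (Sn.add SK).congr (fun n => by ring)
  have SA1 : Summable (fun n : ℕ => ((((n+1) : ℕ) : ℝ) + K) * c (n + 1) * ξ ^ (n + 1)) :=
    (summable_nat_add_iff (f := fun n : ℕ => ((n : ℝ) + K) * c n * ξ ^ n) 1).2 SA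
  -- step 1: express the derivative-type sums
  have h1 : ξ * (∑' n : ℕ, c n * ((n : ℝ) * ξ ^ (n - 1))) = ∑' n : ℕ, (n : ℝ) * c n * ξ ^ n := by
    rw [← tsum_mul_left]
    refine tsum_congr fun n => ?_
    cases n with
    | zero => simp
    | succ m => simp only [Nat.succ_sub_one]; push_cast; ring
  have h2 : ξ ^ 2 * (∑' n : ℕ, c n * ((n : ℝ) * ξ ^ (n - 1))) =
      ∑' n : ℕ, (n : ℝ) * c n * ξ ^ (n + 1) := by
    rw [← tsum_mul_left]
    refine tsum_congr fun n => ?_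
    cases n with
    | zero => simp
    | succ m => simp only [Nat.succ_sub_one]; push_cast; ring
  have h3 : ξ * ∑' n : ℕ, c n * ξ ^ n = ∑' n : ℕ, c n * ξ ^ (n + 1) := by
    rw [← tsum_mul_left]
    exact tsum_congr fun n => by ring
  -- step 2: RHS as combination
  have hRHS : ξ * (1 - ξ) * (∑' n : ℕ, c n * ((n : ℝ) * ξ ^ (n - 1))) +
      (K - b * ξ) * ∑' n : ℕ, c n * ξ ^ n =
      (∑' n : ℕ, ((n : ℝ) + K) * c n * ξ ^ n) -
        ∑' n : ℕ, ((n : ℝ) + b) * c n * ξ ^ (n + 1) := by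
    have e1 : ξ * (1 - ξ) * (∑' n : ℕ, c n * ((n : ℝ) * ξ ^ (n - 1))) =
        ξ * (∑' n : ℕ, c n * ((n : ℝ) * ξ ^ (n - 1))) -
          ξ ^ 2 * (∑' n : ℕ, c n * ((n : ℝ) * ξ ^ (n - 1))) := by ring
    have e2 : (K - b * ξ) * ∑' n : ℕ, c n * ξ ^ n =
        K * ∑' n : ℕ, c n * ξ ^ n - b * (ξ * ∑' n : ℕ, c n * ξ ^ n) := by ring
    rw [e1, e2, h1, h2, h3]
    have hKT : K * ∑' n : ℕ, c n * ξ ^ n = ∑' n : ℕ, K * (c n * ξ ^ n) := tsum_mul_left.symm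
    have hbT : b * ∑' n : ℕ, c n * ξ ^ (n + 1) = ∑' n : ℕ, b * (c n * ξ ^ (n + 1)) :=
      tsum_mul_left.symm
    rw [hKT, hbT]
    have hadd1 : (∑' n : ℕ, (n : ℝ) * c n * ξ ^ n) + ∑' n : ℕ, K * (c n * ξ ^ n) =
        ∑' n : ℕ, ((n : ℝ) + K) * c n * ξ ^ n := by
      rw [← Summable.tsum_add Sn SK]
      exact tsum_congr fun n => by ring
    have hadd2 : (∑' n : ℕ, (n : ℝ) * c n * ξ ^ (n + 1)) + ∑' n : ℕ, b * (c n * ξ ^ (n + 1)) =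
        ∑' n : ℕ, ((n : ℝ) + b) * c n * ξ ^ (n + 1) := by
      rw [← Summable.tsum_add Sn1 hsx]
      exact tsum_congr fun n => by ring
    linarith [hadd1, hadd2]
  rw [hRHS]
  -- step 3: peel off the first terms
  have hA : ∑' n : ℕ, ((n : ℝ) + K) * c n * ξ ^ n =
      ((0 : ℝ) + K) * c 0 * ξ ^ 0 +
        ∑' n : ℕ, ((((n+1) : ℕ) : ℝ) + K) * c (n + 1) * ξ ^ (n + 1) := by
    simpa using Summable.tsum_eq_zero_add SA
  have hL : ∑' n : ℕ, K * (c' n * ξ ^ n) =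
      K * (c' 0 * ξ ^ 0) + ∑' n : ℕ, K * (c' (n + 1) * ξ ^ (n + 1)) :=
    Summable.tsum_eq_zero_add SK'
  have hKL : K * ∑' n : ℕ, c' n * ξ ^ n = ∑' n : ℕ, K * (c' n * ξ ^ n) := tsum_mul_left.symm
  rw [hKL, hL, hA]
  have hsub := Summable.tsum_sub SA1 Sb
  have hcong : ∑' n : ℕ, K * (c' (n + 1) * ξ ^ (n + 1)) =
      ∑' n : ℕ, (((((n+1) : ℕ) : ℝ) + K) * c (n + 1) * ξ ^ (n + 1) -
        ((n : ℝ) + b) * c n * ξ ^ (n + 1)) := by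
    refine tsum_congr fun n => ?_
    push_cast
    linear_combination hstep n
  have hc0 : K * (c' 0 * ξ ^ 0) = ((0 : ℝ) + K) * c 0 * ξ ^ 0 := by
    rw [h0]; ring
  rw [hcong, hsub, hc0]
  ring

lemma Hab_tsum (α β : ℝ) (z : ℝ) :
    Hab α β z = ∑' n : ℕ, (β * ((-1) ^ n / ((n : ℝ) + β) * genBinom (α + 1) n)) * z ^ n := by
  rw [Hab, ← tsum_mul_left]
  exact tsum_congr fun n => by ring

lemma Hab_hasDerivAt (α β : ℝ) {ξ r D : ℝ} (hr0 : 0 < r) (hr1 : r < 1)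
    (hξr : |ξ| < r) (hD0 : 0 < D)
    (hcb' : ∀ n : ℕ, |(-1:ℝ) ^ n / ((n : ℝ) + β) * genBinom (α + 1) n| ≤
      |genBinom (α + 1) n| / D) :
    HasDerivAt (Hab α β)
      (∑' n : ℕ, (β * ((-1) ^ n / ((n : ℝ) + β) * genBinom (α + 1) n)) *
        ((n : ℝ) * ξ ^ (n - 1))) ξ := by
  set c : ℕ → ℝ := fun n => β * ((-1) ^ n / ((n : ℝ) + β) * genBinom (α + 1) n) with hc
  have hH : Hab α β = fun z => ∑' n : ℕ, c n * z ^ n := by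
    funext z; rw [Hab_tsum]
  rw [hH]
  have hcb : ∀ n : ℕ, |c n| ≤ |β| * (|genBinom (α + 1) n| / D) := by
    intro n
    rw [hc]
    simp only []
    rw [abs_mul]
    exact mul_le_mul_of_nonneg_left (hcb' n) (abs_nonneg β)
  set u : ℕ → ℝ := fun n => (|β| / (D * r)) * (((n : ℝ) + 1) * |genBinom (α + 1) n| * r ^ n)
    with hu
  have hu_sum : Summable u := (summable_master (α + 1) hr0 hr1).mul_left _
  have hderiv : ∀ (n : ℕ) (y : ℝ), y ∈ Metric.ball (0 : ℝ) r →
      HasDerivAt (fun z => c n * z ^ n) (c n * ((n : ℝ) * y ^ (n - 1))) y :=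
    fun n y _ => (hasDerivAt_pow n y).const_mul (c n)
  have hbound : ∀ (n : ℕ) (y : ℝ), y ∈ Metric.ball (0 : ℝ) r →
      ‖c n * ((n : ℝ) * y ^ (n - 1))‖ ≤ u n := by
    intro n y hy
    have hyr : |y| ≤ r := by
      rw [Metric.mem_ball, Real.dist_eq, sub_zero] at hy
      exact hy.le
    cases n with
    | zero =>
      simp only [Nat.cast_zero, zero_mul, mul_zero, norm_zero, hu]
      positivity
    | succ m =>
      have hyp : |y| ^ m ≤ r ^ m := pow_le_pow_left₀ (abs_nonneg y) hyr m
      have key : ‖c (m+1) * (((m+1:ℕ) : ℝ) * y ^ ((m+1) - 1))‖ =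
          |c (m+1)| * (((m : ℝ) + 1) * |y| ^ m) := by
        rw [Real.norm_eq_abs, abs_mul]
        congr 1
        rw [abs_mul, abs_pow, Nat.abs_cast, Nat.add_sub_cancel]
        push_cast; ring
      rw [key]
      have step1 : |c (m+1)| * (((m : ℝ) + 1) * |y| ^ m) ≤
          (|β| * (|genBinom (α + 1) (m+1)| / D)) * (((m : ℝ) + 1) * r ^ m) := by
        apply mul_le_mul (hcb (m+1)) _ (by positivity) (by positivity)
        exact mul_le_mul_of_nonneg_left hyp (by positivity)
      refine step1.trans ?_
      have hu1 : u (m+1) = (|β| / D) * (((m : ℝ) + 2) * |genBinom (α + 1) (m+1)| * r ^ m) := by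
        rw [hu]
        simp only []
        push_cast
        rw [pow_succ]
        field_simp
        ring
      rw [hu1]
      have e : (|β| * (|genBinom (α + 1) (m+1)| / D)) * (((m : ℝ) + 1) * r ^ m) =
          (|β| / D) * (((m : ℝ) + 1) * |genBinom (α + 1) (m+1)| * r ^ m) := by ring
      rw [e]
      apply mul_le_mul_of_nonneg_left _ (by positivity)
      apply mul_le_mul_of_nonneg_right _ (by positivity)
      apply mul_le_mul_of_nonneg_right _ (abs_nonneg _)
      linarith
  have hmem : ξ ∈ Metric.ball (0 : ℝ) r := by
    rw [Metric.mem_ball, Real.dist_eq, sub_zero]; exact hξr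
  have hsum0 : Summable (fun n : ℕ => c n * ξ ^ n) := by
    apply summable_of_bound (α + 1) hr0 hr1 (|β| / D)
    intro n
    have hb : ‖c n * ξ ^ n‖ = |c n| * |ξ| ^ n := by
      rw [Real.norm_eq_abs, abs_mul, abs_pow]
    rw [hb]
    have step1 : |c n| * |ξ| ^ n ≤ (|β| * (|genBinom (α + 1) n| / D)) * r ^ n := by
      apply mul_le_mul (hcb n) (pow_le_pow_left₀ (abs_nonneg ξ) hξr.le n) (by positivity)
        (by positivity)
    refine step1.trans ?_
    have h1 : (1 : ℝ) ≤ (n : ℝ) + 1 := by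
      have : (0:ℝ) ≤ (n:ℝ) := Nat.cast_nonneg n
      linarith
    have e : (|β| * (|genBinom (α + 1) n| / D)) * r ^ n =
        (|β| / D) * ((1 : ℝ) * |genBinom (α + 1) n| * r ^ n) := by ring
    rw [e]
    apply mul_le_mul_of_nonneg_left _ (by positivity)
    apply mul_le_mul_of_nonneg_right _ (by positivity)
    exact mul_le_mul_of_nonneg_right h1 (abs_nonneg _)
  exact hasDerivAt_tsum_of_isPreconnected hu_sum Metric.isOpen_ball
    (convex_ball (0 : ℝ) r).isPreconnected hderiv hbound hmem hsum0 hmem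

lemma summable_gen (α β : ℝ) (hβ : -1 < β) (hβ0 : β ≠ 0) {r : ℝ} (hr0 : 0 < r) (hr1 : r < 1)
    (C : ℝ) (w : ℕ → ℝ) (hw : ∀ n, |w n| ≤ C * (((n : ℝ) + 1) * r ^ n)) :
    Summable (fun n : ℕ => (β * ((-1) ^ n / ((n : ℝ) + β) * genBinom (α + 1) n)) * w n) := by
  have hD0 : (0:ℝ) < min |β| (1 + β) := lt_min (abs_pos.mpr hβ0) (by linarith)
  apply summable_of_bound (α + 1) hr0 hr1 (C * |β| / min |β| (1 + β))
  intro n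
  calc ‖(β * ((-1) ^ n / ((n : ℝ) + β) * genBinom (α + 1) n)) * w n‖
      = |β| * |(-1) ^ n / ((n : ℝ) + β) * genBinom (α + 1) n| * |w n| := by
        rw [Real.norm_eq_abs, abs_mul, abs_mul]
    _ ≤ |β| * (|genBinom (α + 1) n| / min |β| (1 + β)) * (C * (((n : ℝ) + 1) * r ^ n)) := by
        apply mul_le_mul _ (hw n) (abs_nonneg _) (by positivity)
        exact mul_le_mul_of_nonneg_left (abs_term_le β hβ hβ0 _ n) (abs_nonneg β)
    _ = (C * |β| / min |β| (1 + β)) * (((n : ℝ) + 1) * |genBinom (α + 1) n| * r ^ n) := by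
        ring

theorem Hab_step_identity (α β : ℝ) (hα : -1 < α) (hβ : -1 < β) (hβ0 : β ≠ 0)
    (ξ : ℝ) (hξ : ξ ∈ Set.Ioo (-1 : ℝ) 1) :
    (α + β + 2) * Hab (α + 1) β ξ =
      ξ * (1 - ξ) * deriv (Hab α β) ξ + (α + β + 2 - β * ξ) * Hab α β ξ := by
  obtain ⟨hξ1, hξ2⟩ := hξ
  have hξabs : |ξ| < 1 := abs_lt.mpr ⟨hξ1, hξ2⟩
  have hr0 : (0:ℝ) < (1 + |ξ|) / 2 := by positivity
  have hr1 : (1 + |ξ|) / 2 < 1 := by linarith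
  have hξr : |ξ| < (1 + |ξ|) / 2 := by linarith [abs_nonneg ξ]
  set r : ℝ := (1 + |ξ|) / 2 with hrdef
  clear_value r
  have hD0 : (0:ℝ) < min |β| (1 + β) := lt_min (abs_pos.mpr hβ0) (by linarith)
  have hder := (Hab_hasDerivAt α β hr0 hr1 hξr hD0
    (fun n => abs_term_le β hβ hβ0 _ n)).deriv
  rw [hder, Hab_tsum (α + 1) β ξ, Hab_tsum α β ξ]
  -- common bounds
  have hn1 : ∀ n : ℕ, (1:ℝ) ≤ (n : ℝ) + 1 := by
    intro n; have : (0:ℝ) ≤ (n:ℝ) := Nat.cast_nonneg n; linarith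
  have hpow0 : ∀ n : ℕ, |ξ| ^ n ≤ r ^ n :=
    fun n => pow_le_pow_left₀ (abs_nonneg ξ) hξr.le n
  have hpow1 : ∀ n : ℕ, |ξ| ^ (n + 1) ≤ r ^ n := by
    intro n
    calc |ξ| ^ (n+1) ≤ r ^ (n+1) := hpow0 (n+1)
      _ ≤ r ^ n := pow_le_pow_of_le_one hr0.le hr1.le (Nat.le_succ n)
  have hrn : ∀ n : ℕ, (0:ℝ) ≤ r ^ n := fun n => pow_nonneg hr0.le n
  -- summability hypotheses
  have S0 : Summable (fun n : ℕ =>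
      (β * ((-1) ^ n / ((n : ℝ) + β) * genBinom (α + 1) n)) * ξ ^ n) := by
    apply summable_gen α β hβ hβ0 hr0 hr1 1 (fun n => ξ ^ n)
    intro n
    rw [abs_pow, one_mul]
    calc |ξ| ^ n ≤ r ^ n := hpow0 n
      _ ≤ ((n:ℝ)+1) * r ^ n := le_mul_of_one_le_left (hrn n) (hn1 n)
  have Sn : Summable (fun n : ℕ =>
      (n : ℝ) * ((β * ((-1) ^ n / ((n : ℝ) + β) * genBinom (α + 1) n))) * ξ ^ n) := by
    apply (summable_gen α β hβ hβ0 hr0 hr1 1 (fun n => (n : ℝ) * ξ ^ n) ?_).congr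
      (fun n => by ring)
    intro n
    rw [abs_mul, abs_pow, Nat.abs_cast, one_mul]
    apply mul_le_mul (by linarith [hn1 n]) (hpow0 n) (by positivity) (by positivity)
  have Sb : Summable (fun n : ℕ =>
      ((n : ℝ) + β) * ((β * ((-1) ^ n / ((n : ℝ) + β) * genBinom (α + 1) n))) * ξ ^ (n+1)) := by
    apply (summable_gen α β hβ hβ0 hr0 hr1 (1 + |β|)
      (fun n => ((n : ℝ) + β) * ξ ^ (n+1)) ?_).congr (fun n => by ring)
    intro n
    rw [abs_mul, abs_pow]
    have h1 : |(n:ℝ) + β| ≤ (n:ℝ) + |β| := by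
      calc |(n:ℝ) + β| ≤ |(n:ℝ)| + |β| := abs_add_le _ _
        _ = (n:ℝ) + |β| := by rw [Nat.abs_cast]
    have h2 : (n:ℝ) + |β| ≤ (1 + |β|) * ((n:ℝ) + 1) := by
      have h3 : (0:ℝ) ≤ (n:ℝ) := Nat.cast_nonneg n
      have h4 : (0:ℝ) ≤ |β| := abs_nonneg β
      nlinarith
    calc |(n:ℝ) + β| * |ξ| ^ (n+1) ≤ ((1 + |β|) * ((n:ℝ) + 1)) * r ^ n := by
          apply mul_le_mul (h1.trans h2) (hpow1 n) (by positivity) (by positivity)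
      _ = (1 + |β|) * (((n:ℝ) + 1) * r ^ n) := by ring
  have hsx : Summable (fun n : ℕ =>
      β * (((β * ((-1) ^ n / ((n : ℝ) + β) * genBinom (α + 1) n))) * ξ ^ (n+1))) := by
    apply (summable_gen α β hβ hβ0 hr0 hr1 |β| (fun n => β * ξ ^ (n+1)) ?_).congr
      (fun n => by ring)
    intro n
    rw [abs_mul, abs_pow]
    apply mul_le_mul_of_nonneg_left _ (abs_nonneg β)
    calc |ξ| ^ (n+1) ≤ r ^ n := hpow1 n
      _ ≤ ((n:ℝ)+1) * r ^ n := le_mul_of_one_le_left (hrn n) (hn1 n)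
  have SK' : Summable (fun n : ℕ =>
      (α + β + 2) * ((β * ((-1) ^ n / ((n : ℝ) + β) * genBinom (α + 1 + 1) n)) * ξ ^ n)) := by
    apply (summable_gen (α + 1) β hβ hβ0 hr0 hr1 |α + β + 2|
      (fun n => (α + β + 2) * ξ ^ n) ?_).congr (fun n => by ring)
    intro n
    rw [abs_mul, abs_pow]
    apply mul_le_mul_of_nonneg_left _ (abs_nonneg _)
    calc |ξ| ^ n ≤ r ^ n := hpow0 n
      _ ≤ ((n:ℝ)+1) * r ^ n := le_mul_of_one_le_left (hrn n) (hn1 n)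
  -- constant term
  have h0 : (α + β + 2) * ((β * ((-1) ^ (0:ℕ) / (((0:ℕ) : ℝ) + β) * genBinom (α + 1 + 1) 0)) * ξ ^ (0:ℕ)) =
      (α + β + 2) * ((β * ((-1) ^ (0:ℕ) / (((0:ℕ) : ℝ) + β) * genBinom (α + 1) 0)) * ξ ^ (0:ℕ)) := by
    simp [genBinom_zero]
  -- step identity
  have hstep : ∀ n : ℕ,
      (α + β + 2) * ((β * ((-1) ^ (n+1) / (((n+1:ℕ) : ℝ) + β) * genBinom (α + 1 + 1) (n+1))) * ξ ^ (n+1)) =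
      (((n : ℝ) + 1) + (α + β + 2)) * ((β * ((-1) ^ (n+1) / (((n+1:ℕ) : ℝ) + β) * genBinom (α + 1) (n+1)))) * ξ ^ (n+1) -
        ((n : ℝ) + β) * ((β * ((-1) ^ n / ((n : ℝ) + β) * genBinom (α + 1) n))) * ξ ^ (n+1) := by
    intro n
    have hne1 : ((n:ℝ) + β) ≠ 0 := nβ_ne β hβ hβ0 n
    have hne2 : ((n:ℝ) + 1 + β) ≠ 0 := by
      have := nβ_ne β hβ hβ0 (n+1)
      push_cast at this
      convert this using 2
    have hne3 : ((n:ℝ) + 1) ≠ 0 := by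
      have : (0:ℝ) ≤ (n:ℝ) := Nat.cast_nonneg n
      linarith
    have h1 := genBinom_pascal (α + 1) n
    have h2' : genBinom (α + 1) (n+1) = (α + 1 - (n:ℝ)) * genBinom (α + 1) n / ((n:ℝ) + 1) := by
      have h2 := genBinom_succ (α + 1) n
      field_simp
      linarith [h2]
    rw [h1, h2']
    push_cast
    field_simp
    ring
  exact tsum_rearrange
    (fun n => β * ((-1) ^ n / ((n : ℝ) + β) * genBinom (α + 1) n))
    (fun n => β * ((-1) ^ n / ((n : ℝ) + β) * genBinom (α + 1 + 1) n))
    (α + β + 2) β ξ S0 Sn Sb SK' hsx h0 hstep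
end

section
/- For every natural number α, every real β with -1 < β ≤ 0, β ≠ 0, and every t ∈ [0,1), the finite sum H_{α,β}(t) = β ∑_{n=0}^{α+1} ((-t)^n/(n+β)) · C(α+1, n) satisfies H_{α,β}(t) ≥ 1. -/
/-- For `α ∈ ℕ`, the finite sum `H_{α,β}(t) = β ∑_{n=0}^{α+1} (-t)^n/(n+β) C(α+1,n)`. -/
noncomputable def Hfin (α : ℕ) (β t : ℝ) : ℝ :=
  β * ∑ n ∈ Finset.range (α + 2), (-t) ^ n / (n + β) * (Nat.choose (α + 1) n)

theorem Hfin_ge_one (α : ℕ) (β : ℝ) (hβ : -1 < β) (hβ0 : β ≤ 0) (hβne : β ≠ 0)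
    (t : ℝ) (ht : t ∈ Set.Ico (0 : ℝ) 1) :
    1 ≤ Hfin α β t := by
  obtain ⟨ht0, ht1⟩ := ht
  -- positivity of n + β for n ≥ 1
  have hnβ : ∀ n : ℕ, 1 ≤ n → 0 < (n : ℝ) + β := by
    intro n hn
    have : (1 : ℝ) ≤ n := by exact_mod_cast hn
    linarith
  -- split off the n = 0 term
  set S : ℝ → ℝ := fun x => ∑ n ∈ Finset.Ico 1 (α + 2),
      (-x) ^ n / (n + β) * (Nat.choose (α + 1) n) with hS
  have hsplit : ∀ x : ℝ, Hfin α β x = 1 + β * S x := by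
    intro x
    unfold Hfin
    rw [Finset.range_eq_Ico, Finset.sum_eq_sum_Ico_succ_bot (by omega)]
    simp only [pow_zero, Nat.cast_zero, zero_add, Nat.choose_zero_right, Nat.cast_one, mul_one]
    rw [mul_add, one_div, mul_inv_cancel₀ hβne]
  rw [hsplit]
  -- it suffices to show S t ≤ 0
  suffices hSle : S t ≤ 0 by nlinarith
  rcases eq_or_lt_of_le ht0 with h0 | h0
  · -- t = 0 case
    rw [hS]
    simp only [← h0]
    apply le_of_eq
    apply Finset.sum_eq_zero
    intro n hn
    rw [Finset.mem_Ico] at hn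
    rw [neg_zero, zero_pow (by omega)]
    ring
  -- t > 0 : consider g x = ∑ (-1)^n C x^(n+β)/(n+β), antitone on [0,t], g 0 = 0
  set g : ℝ → ℝ := fun x => ∑ n ∈ Finset.Ico 1 (α + 2),
      (-1 : ℝ) ^ n * (Nat.choose (α + 1) n) * x ^ ((n : ℝ) + β) / ((n : ℝ) + β) with hg
  have hderiv : ∀ x : ℝ, 0 < x → x < 1 →
      HasDerivAt g (∑ n ∈ Finset.Ico 1 (α + 2),
        (-1 : ℝ) ^ n * (Nat.choose (α + 1) n) * x ^ ((n : ℝ) + β - 1)) x := by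
    intro x hx hx1
    apply HasDerivAt.fun_sum
    intro n hn
    rw [Finset.mem_Ico] at hn
    have h1 : HasDerivAt (fun y : ℝ => y ^ ((n : ℝ) + β))
        (((n : ℝ) + β) * x ^ ((n : ℝ) + β - 1)) x :=
      Real.hasDerivAt_rpow_const (Or.inl hx.ne')
    have h2 := (h1.const_mul ((-1 : ℝ) ^ n * (Nat.choose (α + 1) n))).div_const ((n : ℝ) + β)
    rw [mul_div_assoc, mul_div_cancel_left₀ _ (hnβ n hn.1).ne'] at h2
    exact h2
  have hderiv_nonpos : ∀ x : ℝ, 0 < x → x < 1 →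
      (∑ n ∈ Finset.Ico 1 (α + 2),
        (-1 : ℝ) ^ n * (Nat.choose (α + 1) n) * x ^ ((n : ℝ) + β - 1)) ≤ 0 := by
    intro x hx hx1
    have key : (∑ n ∈ Finset.Ico 1 (α + 2),
        (-1 : ℝ) ^ n * (Nat.choose (α + 1) n) * x ^ ((n : ℝ) + β - 1))
        = x ^ (β - 1) * ((1 - x) ^ (α + 1) - 1) := by
      have hxpow : ∀ n : ℕ, x ^ ((n : ℝ) + β - 1) = x ^ n * x ^ (β - 1) := by
        intro n
        rw [show (n : ℝ) + β - 1 = (n : ℝ) + (β - 1) by ring, Real.rpow_add hx,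
          Real.rpow_natCast]
      have hbinom : (1 - x) ^ (α + 1) = ∑ n ∈ Finset.range (α + 2),
          (-x) ^ n * (Nat.choose (α + 1) n) := by
        have h := add_pow (-x) 1 (α + 1)
        simp only [one_pow, mul_one] at h
        rw [show (1 : ℝ) - x = -x + 1 by ring, h]
      rw [hbinom, Finset.range_eq_Ico, Finset.sum_eq_sum_Ico_succ_bot (show 0 < α + 2 by omega)]
      simp only [pow_zero, Nat.choose_zero_right, Nat.cast_one, one_mul]
      rw [add_sub_cancel_left, Finset.mul_sum]
      apply Finset.sum_congr rfl
      intro n hn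
      rw [hxpow n, neg_pow]
      ring
    rw [key]
    apply mul_nonpos_of_nonneg_of_nonpos
    · exact (Real.rpow_pos_of_pos hx _).le
    · have : (1 - x) ^ (α + 1) ≤ 1 := pow_le_one₀ (by linarith) (by linarith)
      linarith
  have hcont : ContinuousOn g (Set.Icc 0 t) := by
    apply continuousOn_finset_sum
    intro n hn
    rw [Finset.mem_Ico] at hn
    have hc : ContinuousOn (fun x : ℝ => x ^ ((n : ℝ) + β)) (Set.Icc 0 t) := by
      intro x _
      exact (Real.continuousAt_rpow_const x _ (Or.inr (hnβ n hn.1).le)).continuousWithinAt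
    exact (hc.const_smul ((-1 : ℝ) ^ n * ((α + 1).choose n : ℝ))).div_const _
  have hanti : AntitoneOn g (Set.Icc 0 t) := by
    apply antitoneOn_of_deriv_nonpos (convex_Icc 0 t) hcont
    · intro x hx
      rw [interior_Icc] at hx
      exact ((hderiv x hx.1 (lt_trans hx.2 ht1)).differentiableAt).differentiableWithinAt
    · intro x hx
      rw [interior_Icc] at hx
      rw [(hderiv x hx.1 (lt_trans hx.2 ht1)).deriv]
      exact hderiv_nonpos x hx.1 (lt_trans hx.2 ht1)
  have hg0 : g 0 = 0 := by
    rw [hg]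
    apply Finset.sum_eq_zero
    intro n hn
    rw [Finset.mem_Ico] at hn
    rw [Real.zero_rpow (hnβ n hn.1).ne']
    ring
  have hgt : g t ≤ 0 := by
    have := hanti (Set.left_mem_Icc.2 ht0) (Set.right_mem_Icc.2 ht0) ht0
    rwa [hg0] at this
  have hrel : g t = t ^ β * S t := by
    rw [hg, hS, Finset.mul_sum]
    apply Finset.sum_congr rfl
    intro n hn
    rw [Real.rpow_add h0, Real.rpow_natCast, neg_pow]
    ring
  have htβ : 0 < t ^ β := Real.rpow_pos_of_pos h0 β
  nlinarith [hrel ▸ hgt]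
end

section
/- For every natural number α, every real β with -1 < β < 0, and every t ∈ [0,1), one has 0 ≤ H_{α,β+1}(t) ≤ H_{α,β}(t), where H_{α,β}(t) = β ∑_{n=0}^{α+1} ((-t)^n/(n+β)) · C(α+1, n) (and H_{α,β+1} is defined with β+1 in place of β). -/
open Real Finset intervalIntegral

private lemma int_rpow {r : ℝ} (hr : -1 < r) : ∫ x in (0:ℝ)..1, x ^ r = 1/(r+1) := by
  rw [integral_rpow (Or.inl hr), Real.one_rpow, Real.zero_rpow (by linarith)]
  ring

private lemma binom_deriv_sum (m : ℕ) (z : ℝ) :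
    ∑ n ∈ Finset.range (m+2), (n:ℝ) * (Nat.choose (m+1) n : ℝ) * z^n
      = ((m:ℝ)+1) * z * (1+z)^m := by
  have hb : ∑ i ∈ Finset.range (m+1), (Nat.choose m i : ℝ) * z^i = (1+z)^m := by
    rw [show (1:ℝ)+z = z+1 from add_comm 1 z, add_pow]
    exact Finset.sum_congr rfl fun i _ => by rw [one_pow, mul_one, mul_comm]
  rw [Finset.sum_range_succ']
  have h2 : ∀ i ∈ Finset.range (m+1),
      ((i+1 : ℕ):ℝ) * (Nat.choose (m+1) (i+1) : ℝ) * z^(i+1)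
        = ((m:ℝ)+1) * z * ((Nat.choose m i : ℝ) * z^i) := by
    intro i _
    have hc : ((m:ℝ)+1) * (Nat.choose m i : ℝ)
        = (Nat.choose (m+1) (i+1) : ℝ) * ((i:ℝ)+1) := by
      exact_mod_cast congrArg (Nat.cast (R := ℝ)) (Nat.add_one_mul_choose_eq m i)
    push_cast
    calc ((i:ℝ)+1) * (Nat.choose (m+1) (i+1) : ℝ) * z^(i+1)
        = ((Nat.choose (m+1) (i+1) : ℝ) * ((i:ℝ)+1)) * z^(i+1) := by ring
      _ = (((m:ℝ)+1) * (Nat.choose m i : ℝ)) * z^(i+1) := by rw [← hc]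
      _ = ((m:ℝ)+1) * z * ((Nat.choose m i : ℝ) * z^i) := by ring
  rw [Finset.sum_congr rfl h2, ← Finset.mul_sum, hb]
  push_cast
  ring

private lemma sum_rpow_eq (α : ℕ) (β t x : ℝ) (hx : 0 < x) :
    ∑ n ∈ Finset.range (α+2), (-t)^n * (Nat.choose (α+1) n : ℝ) * x^((n:ℝ)+β)
      = x^β * (1 - t*x)^(α+1) := by
  have h : ∀ n ∈ Finset.range (α+2),
      (-t)^n * (Nat.choose (α+1) n : ℝ) * x^((n:ℝ)+β)
        = x^β * ((-(t*x))^n * (Nat.choose (α+1) n : ℝ)) := by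
    intro n _
    rw [show (n:ℝ)+β = β+(n:ℝ) by ring, Real.rpow_add hx, Real.rpow_natCast]
    ring
  rw [Finset.sum_congr rfl h, ← Finset.mul_sum]
  congr 1
  rw [show (1 : ℝ) - t*x = -(t*x) + 1 by ring, add_pow]
  exact (Finset.sum_congr rfl fun n _ => by rw [one_pow, mul_one]).symm

private lemma sum_rpow_eq' (α : ℕ) (β t x : ℝ) (hx : 0 < x) :
    ∑ n ∈ Finset.range (α+2), (n:ℝ) * ((-t)^n * (Nat.choose (α+1) n : ℝ)) * x^((n:ℝ)+β-1)
      = -(((α:ℝ)+1) * t) * x^β * (1 - t*x)^α := by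
  have h : ∀ n ∈ Finset.range (α+2),
      (n:ℝ) * ((-t)^n * (Nat.choose (α+1) n : ℝ)) * x^((n:ℝ)+β-1)
        = x^(β-1) * ((n:ℝ) * (Nat.choose (α+1) n : ℝ) * (-(t*x))^n) := by
    intro n _
    rw [show (n:ℝ)+β-1 = (β-1)+(n:ℝ) by ring, Real.rpow_add hx, Real.rpow_natCast]
    ring
  rw [Finset.sum_congr rfl h, ← Finset.mul_sum, binom_deriv_sum α (-(t*x))]
  have hxb : x^β = x^(β-1) * x := by
    rw [← Real.rpow_add_one hx.ne' (β-1)]; norm_num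
  rw [hxb]
  ring_nf


theorem Hfin_monotone_in_beta (α : ℕ) (β : ℝ) (hβ : -1 < β) (hβ0 : β < 0)
    (t : ℝ) (ht : t ∈ Set.Ico (0 : ℝ) 1) :
    0 ≤ Hfin α (β + 1) t ∧ Hfin α (β + 1) t ≤ Hfin α β t := by
  obtain ⟨ht0, ht1⟩ := ht
  have hβ1 : (0:ℝ) < β + 1 := by linarith
  have hnb : ∀ n : ℕ, ((n:ℝ) + β ≠ 0) := by
    intro n
    rcases n with _ | m
    · simpa using hβ0.ne
    · have h0 : (0:ℝ) ≤ (m:ℝ) := Nat.cast_nonneg m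
      have : (0:ℝ) < ((m+1 : ℕ):ℝ) + β := by push_cast; linarith
      exact this.ne'
  have hnb1 : ∀ n : ℕ, ((n:ℝ) + β + 1 ≠ 0) := by
    intro n
    have h0 : (0:ℝ) ≤ (n:ℝ) := Nat.cast_nonneg n
    have : (0:ℝ) < (n:ℝ) + β + 1 := by linarith
    exact this.ne'
  have hposn : ∀ n : ℕ, 1 ≤ n → (0:ℝ) < (n:ℝ) + β := by
    intro n hn
    have : (1:ℝ) ≤ (n:ℝ) := by exact_mod_cast hn
    linarith
  have h1tx : ∀ x : ℝ, x ∈ Set.Icc (0:ℝ) 1 → 0 ≤ 1 - t*x := by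
    intro x hx
    have : t * x ≤ 1 * 1 := mul_le_mul ht1.le hx.2 hx.1 zero_le_one
    linarith
  -- Part 1 : 0 ≤ Hfin α (β+1) t
  have part1 : 0 ≤ Hfin α (β + 1) t := by
    have hint : ∀ n : ℕ, IntervalIntegrable
        (fun x : ℝ => (-t)^n * (Nat.choose (α+1) n : ℝ) * x^((n:ℝ)+β))
          MeasureTheory.volume 0 1 := by
      intro n
      have hr : -1 < (n:ℝ) + β := by
        have : (0:ℝ) ≤ (n:ℝ) := Nat.cast_nonneg n
        linarith
      exact (intervalIntegrable_rpow' hr).const_mul _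
    have hterm : ∀ n ∈ Finset.range (α+2),
        (-t)^n / ((n:ℝ) + (β+1)) * (Nat.choose (α+1) n : ℝ)
          = ∫ x in (0:ℝ)..1, (-t)^n * (Nat.choose (α+1) n : ℝ) * x^((n:ℝ)+β) := by
      intro n _
      rw [intervalIntegral.integral_const_mul, int_rpow (by
        have : (0:ℝ) ≤ (n:ℝ) := Nat.cast_nonneg n; linarith)]
      rw [show (n:ℝ)+(β+1) = (n:ℝ)+β+1 by ring, mul_one_div, div_mul_eq_mul_div]
    have hsum : ∑ n ∈ Finset.range (α+2),
        (-t)^n / ((n:ℝ) + (β+1)) * (Nat.choose (α+1) n : ℝ)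
          = ∫ x in (0:ℝ)..1, ∑ n ∈ Finset.range (α+2),
              (-t)^n * (Nat.choose (α+1) n : ℝ) * x^((n:ℝ)+β) := by
      rw [Finset.sum_congr rfl hterm,
        ← intervalIntegral.integral_finset_sum (fun n _ => hint n)]
    have hpos : 0 ≤ ∫ x in (0:ℝ)..1, ∑ n ∈ Finset.range (α+2),
        (-t)^n * (Nat.choose (α+1) n : ℝ) * x^((n:ℝ)+β) := by
      apply intervalIntegral.integral_nonneg zero_le_one
      intro x hx
      rcases eq_or_lt_of_le hx.1 with h0 | h0
      · apply le_of_eq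
        symm
        rw [← h0]
        apply Finset.sum_eq_zero
        intro n _
        rw [Real.zero_rpow (hnb n), mul_zero]
      · rw [sum_rpow_eq α β t x h0]
        exact mul_nonneg (Real.rpow_nonneg h0.le β) (pow_nonneg (h1tx x hx) _)
    unfold Hfin
    exact mul_nonneg hβ1.le (by rw [hsum]; exact hpos)
  refine ⟨part1, ?_⟩
  -- Part 2
  set F : ℕ → ℝ → ℝ := fun n x =>
    ((n:ℝ) * ((-t)^n * (Nat.choose (α+1) n : ℝ))) * (x^((n:ℝ)+β-1) - x^((n:ℝ)+β)) with hF
  have hintF : ∀ n : ℕ, IntervalIntegrable (F n) MeasureTheory.volume 0 1 := by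
    intro n
    rcases n with _ | m
    · simp only [hF, Nat.cast_zero, zero_mul]
      exact intervalIntegrable_const
    · have hp := hposn (m+1) (Nat.le_add_left 1 m)
      have h1 : -1 < ((m+1 : ℕ):ℝ) + β - 1 := by linarith
      have h2 : -1 < ((m+1 : ℕ):ℝ) + β := by linarith
      exact ((intervalIntegrable_rpow' h1).sub (intervalIntegrable_rpow' h2)).const_mul _
  have hintval : ∀ n : ℕ, 1 ≤ n →
      (∫ x in (0:ℝ)..1, F n x)
        = ((n:ℝ) * ((-t)^n * (Nat.choose (α+1) n : ℝ)))
            * (1/((n:ℝ)+β) - 1/((n:ℝ)+β+1)) := by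
    intro n hn
    have hp := hposn n hn
    have h1 : -1 < (n:ℝ) + β - 1 := by linarith
    have h2 : -1 < (n:ℝ) + β := by linarith
    simp only [hF]
    rw [intervalIntegral.integral_const_mul,
      intervalIntegral.integral_sub (intervalIntegrable_rpow' h1) (intervalIntegrable_rpow' h2),
      int_rpow h1, int_rpow h2]
    norm_num
  have hdiff : Hfin α β t - Hfin α (β+1) t
      = ∑ n ∈ Finset.range (α+2), -(∫ x in (0:ℝ)..1, F n x) := by
    unfold Hfin
    rw [Finset.mul_sum, Finset.mul_sum, ← Finset.sum_sub_distrib]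
    refine Finset.sum_congr rfl fun n _ => ?_
    rcases Nat.eq_zero_or_pos n with h0 | h0
    · subst h0
      have h1 : (∫ x in (0:ℝ)..1, F 0 x) = 0 := by simp [hF]
      rw [h1, neg_zero]
      have hb : ((0:ℕ):ℝ) + β ≠ 0 := hnb 0
      have hb1 : ((0:ℕ):ℝ) + (β+1) ≠ 0 := by push_cast; intro h; exact hβ1.ne' (by linarith)
      field_simp
      push_cast
      ring
    · rw [hintval n h0]
      have hb := hnb n
      have hb1 := hnb1 n
      have hb1' : (n:ℝ) + (β+1) ≠ 0 := by rw [show (n:ℝ)+(β+1) = (n:ℝ)+β+1 by ring]; exact hb1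
      field_simp
      ring
  have hsumF : ∀ x ∈ Set.Icc (0:ℝ) 1, ∑ n ∈ Finset.range (α+2), F n x ≤ 0 := by
    intro x hx
    rcases eq_or_lt_of_le hx.1 with h0 | h0
    · apply le_of_eq
      rw [← h0]
      apply Finset.sum_eq_zero
      intro n _
      rcases Nat.eq_zero_or_pos n with hz | hz
      · subst hz; simp [hF]
      · have hp := hposn n hz
        have hne2 : (n:ℝ) + β ≠ 0 := hnb n
        have hne1 : (n:ℝ) + β - 1 ≠ 0 := by
          rcases Nat.lt_or_ge n 2 with h | h
          · have : n = 1 := by omega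
            subst this
            have : ((1:ℕ):ℝ) + β - 1 = β := by push_cast; ring
            rw [this]; exact hβ0.ne
          · have : (2:ℝ) ≤ (n:ℝ) := by exact_mod_cast h
            have : (0:ℝ) < (n:ℝ) + β - 1 := by linarith
            exact this.ne'
        simp only [hF]
        rw [Real.zero_rpow hne1, Real.zero_rpow hne2, sub_zero, mul_zero]
    · have hfx : ∀ n ∈ Finset.range (α+2),
          F n x = (1-x) * ((n:ℝ) * ((-t)^n * (Nat.choose (α+1) n : ℝ)) * x^((n:ℝ)+β-1)) := by
        intro n _
        have hxx : x^((n:ℝ)+β) = x^((n:ℝ)+β-1) * x := by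
          rw [← Real.rpow_add_one h0.ne' ((n:ℝ)+β-1)]; norm_num
        simp only [hF, hxx]
        ring
      rw [Finset.sum_congr rfl hfx, ← Finset.mul_sum, sum_rpow_eq' α β t x h0]
      have h1x : 0 ≤ 1 - x := by linarith [hx.2]
      have h1 : 0 ≤ ((α:ℝ)+1) * t := by positivity
      have h2 : 0 ≤ x^β := Real.rpow_nonneg h0.le β
      have h3 : 0 ≤ (1-t*x)^α := pow_nonneg (h1tx x hx) α
      have hc : -(((α:ℝ)+1) * t) * x^β * (1-t*x)^α ≤ 0 := by
        nlinarith [mul_nonneg (mul_nonneg h1 h2) h3]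
      exact mul_nonpos_iff.mpr (Or.inl ⟨h1x, hc⟩)
  have hI : (∫ x in (0:ℝ)..1, ∑ n ∈ Finset.range (α+2), F n x) ≤ 0 := by
    have hneg := intervalIntegral.integral_nonneg (μ := MeasureTheory.volume)
      (f := fun x => -(∑ n ∈ Finset.range (α+2), F n x)) zero_le_one
      (fun x hx => by simpa using hsumF x hx)
    rw [intervalIntegral.integral_neg] at hneg
    linarith
  have hfin : 0 ≤ Hfin α β t - Hfin α (β+1) t := by
    rw [hdiff, Finset.sum_neg_distrib,
      ← intervalIntegral.integral_finset_sum (fun n _ => hintF n)]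
    linarith
  linarith
end

section
/- Let α ∈ ℕ and β ∈ (-1,0). Then for every x ∈ [0,1), the Cauchy–Schwarz type inequality (∑_{j=0}^{α+1} j·(-x)^j/(j+β)·C(α+1,j))² ≤ (∑_{j=0}^{α+1} j²·(-x)^j/(j+β)·C(α+1,j)) · (∑_{j=0}^{α+1} (-x)^j/(j+β)·C(α+1,j)) holds, assuming β ∈ 𝒥_α (i.e., Q_{α,β} has no zero in the unit disk, equivalently H_{α,β}(t) > 0 for t ∈ [0,1)). -/
private lemma binom_sum (m : ℕ) (y : ℝ) :
    ∑ k ∈ Finset.range (m + 1), y ^ k * (Nat.choose m k : ℝ) = (1 + y) ^ m := by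
  rw [add_comm (1 : ℝ) y, add_pow]
  simp

private lemma denom_ne (β : ℝ) (hβ : -1 < β) (hβ0 : β < 0) (n : ℕ) : ((n : ℝ) + β) ≠ 0 := by
  rcases Nat.eq_zero_or_pos n with h | h
  · subst h; simpa using ne_of_lt hβ0
  · have : (1 : ℝ) ≤ (n : ℝ) := by exact_mod_cast h
    exact ne_of_gt (by linarith)

private lemma Q_nonneg (α : ℕ) (β x : ℝ) (hβ : -1 < β) (hβ0 : β < 0)
    (hx0 : 0 ≤ x) (hx1 : x < 1) :
    0 ≤ ∑ k ∈ Finset.range (α + 1), (-x) ^ k / ((k : ℝ) + β + 1) * (Nat.choose α k) := by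
  have hkβ : ∀ k : ℕ, (-1 : ℝ) < (k : ℝ) + β := by
    intro k
    have : (0 : ℝ) ≤ (k : ℝ) := Nat.cast_nonneg k
    linarith
  have hkβ1 : ∀ k : ℕ, (0 : ℝ) < (k : ℝ) + β + 1 := by
    intro k; have := hkβ k; linarith
  have hint : ∀ k ∈ Finset.range (α + 1),
      IntervalIntegrable (fun t : ℝ => (-x) ^ k * (Nat.choose α k : ℝ) * t ^ ((k : ℝ) + β))
        MeasureTheory.volume 0 1 :=
    fun k _ => (intervalIntegral.intervalIntegrable_rpow' (hkβ k)).const_mul _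
  have heq : ∑ k ∈ Finset.range (α + 1), (-x) ^ k / ((k : ℝ) + β + 1) * (Nat.choose α k)
      = ∫ t in (0:ℝ)..1, ∑ k ∈ Finset.range (α + 1),
          (-x) ^ k * (Nat.choose α k : ℝ) * t ^ ((k : ℝ) + β) := by
    rw [intervalIntegral.integral_finset_sum hint]
    refine Finset.sum_congr rfl fun k _ => ?_
    rw [intervalIntegral.integral_const_mul, integral_rpow (Or.inl (hkβ k))]
    rw [Real.one_rpow, Real.zero_rpow (ne_of_gt (hkβ1 k))]
    field_simp
    ring
  rw [heq]
  apply intervalIntegral.integral_nonneg (by norm_num)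
  intro u hu
  rcases eq_or_lt_of_le hu.1 with h0 | h0
  · apply Finset.sum_nonneg
    intro k _
    rw [← h0, Real.zero_rpow (denom_ne β hβ hβ0 k)]
    simp
  · have hterm : ∀ k ∈ Finset.range (α + 1),
        (-x) ^ k * (Nat.choose α k : ℝ) * u ^ ((k : ℝ) + β)
          = ((-(x * u)) ^ k * (Nat.choose α k : ℝ)) * u ^ β := by
      intro k _
      rw [Real.rpow_add h0, Real.rpow_natCast]
      have : (-(x * u)) ^ k = (-x) ^ k * u ^ k := by
        rw [← mul_pow]; ring_nf
      rw [this]; ring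
    rw [Finset.sum_congr rfl hterm, ← Finset.sum_mul, binom_sum]
    have hxu : x * u ≤ x := mul_le_of_le_one_right hx0 hu.2
    have h1 : 0 ≤ 1 + -(x * u) := by linarith
    exact mul_nonneg (pow_nonneg h1 α) (Real.rpow_nonneg h0.le β)

theorem cauchy_schwarz_type (α : ℕ) (β : ℝ) (hβ : -1 < β) (hβ0 : β < 0)
    (hH : ∀ t ∈ Set.Ico (0 : ℝ) 1, 0 < Hfin α β t)
    (x : ℝ) (hx : x ∈ Set.Ico (0 : ℝ) 1) :
    (∑ j ∈ Finset.range (α + 2), (j : ℝ) * (-x) ^ j / (j + β) * (Nat.choose (α + 1) j)) ^ 2 ≤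
      (∑ j ∈ Finset.range (α + 2), (j : ℝ) ^ 2 * (-x) ^ j / (j + β) * (Nat.choose (α + 1) j)) *
        (∑ j ∈ Finset.range (α + 2), (-x) ^ j / (j + β) * (Nat.choose (α + 1) j)) := by
  obtain ⟨hx0, hx1⟩ := hx
  have hne : ∀ n : ℕ, ((n : ℝ) + β) ≠ 0 := denom_ne β hβ hβ0
  have hne1 : ∀ n : ℕ, ((n : ℝ) + β + 1) ≠ 0 := by
    intro n
    have : (0 : ℝ) ≤ (n : ℝ) := Nat.cast_nonneg n
    exact ne_of_gt (by linarith)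
  -- binomial sum
  have hA0 : ∑ j ∈ Finset.range (α + 2), (-x) ^ j * (Nat.choose (α + 1) j : ℝ)
      = (1 - x) ^ (α + 1) := by
    have := binom_sum (α + 1) (-x)
    rw [show (1 : ℝ) + -x = 1 - x by ring] at this
    exact this
  have hc : ∀ k : ℕ, ((α : ℝ) + 1) * (Nat.choose α k : ℝ)
      = ((k : ℝ) + 1) * (Nat.choose (α + 1) (k + 1) : ℝ) := by
    intro k
    have h := Nat.add_one_mul_choose_eq α k
    have h2 := congrArg (Nat.cast : ℕ → ℝ) h
    push_cast at h2
    linarith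
  have hA1 : ∑ j ∈ Finset.range (α + 2), (j : ℝ) * (-x) ^ j * (Nat.choose (α + 1) j : ℝ)
      = -((α : ℝ) + 1) * x * (1 - x) ^ α := by
    rw [Finset.sum_range_succ']
    push_cast
    have hterm : ∀ i ∈ Finset.range (α + 1),
        ((i : ℝ) + 1) * (-x) ^ (i + 1) * (Nat.choose (α + 1) (i + 1) : ℝ)
          = (-x) * (((α : ℝ) + 1) * ((-x) ^ i * (Nat.choose α i : ℝ))) := by
      intro i _
      rw [pow_succ]
      linear_combination ((-x) ^ i * x) * hc i
    rw [Finset.sum_congr rfl hterm, ← Finset.mul_sum, ← Finset.mul_sum, binom_sum]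
    rw [show (1 : ℝ) + -x = 1 - x by ring]
    ring
  -- identity (i)
  have h1 : (∑ j ∈ Finset.range (α + 2), (j : ℝ) * (-x) ^ j / (j + β) * (Nat.choose (α + 1) j))
      = (1 - x) ^ (α + 1)
        - β * ∑ j ∈ Finset.range (α + 2), (-x) ^ j / (j + β) * (Nat.choose (α + 1) j) := by
    have hterm : ∀ j ∈ Finset.range (α + 2),
        (j : ℝ) * (-x) ^ j / (j + β) * (Nat.choose (α + 1) j)
          = (-x) ^ j * (Nat.choose (α + 1) j : ℝ)
            - β * ((-x) ^ j / (j + β) * (Nat.choose (α + 1) j)) := by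
      intro j _
      field_simp [hne j]
      ring
    rw [Finset.sum_congr rfl hterm, Finset.sum_sub_distrib, ← Finset.mul_sum, hA0]
  -- identity (ii)
  have h2 : (∑ j ∈ Finset.range (α + 2), (j : ℝ) ^ 2 * (-x) ^ j / (j + β) * (Nat.choose (α + 1) j))
      = -((α : ℝ) + 1) * x * (1 - x) ^ α - β * (1 - x) ^ (α + 1)
        + β ^ 2 * ∑ j ∈ Finset.range (α + 2), (-x) ^ j / (j + β) * (Nat.choose (α + 1) j) := by
    have hterm : ∀ j ∈ Finset.range (α + 2),
        (j : ℝ) ^ 2 * (-x) ^ j / (j + β) * (Nat.choose (α + 1) j)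
          = (j : ℝ) * (-x) ^ j * (Nat.choose (α + 1) j : ℝ)
            - β * ((-x) ^ j * (Nat.choose (α + 1) j : ℝ))
            + β ^ 2 * ((-x) ^ j / (j + β) * (Nat.choose (α + 1) j)) := by
      intro j _
      field_simp [hne j]
      ring
    rw [Finset.sum_congr rfl hterm, Finset.sum_add_distrib, Finset.sum_sub_distrib,
      ← Finset.mul_sum, ← Finset.mul_sum, hA0, hA1]
  -- identity (iv'): β * S0 - (α+1) * x * Q = (1-x)^(α+1)
  have h4 : β * (∑ j ∈ Finset.range (α + 2), (-x) ^ j / (j + β) * (Nat.choose (α + 1) j))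
        - ((α : ℝ) + 1) * x
          * (∑ k ∈ Finset.range (α + 1), (-x) ^ k / ((k : ℝ) + β + 1) * (Nat.choose α k))
      = (1 - x) ^ (α + 1) := by
    have eS : (∑ j ∈ Finset.range (α + 2), (-x) ^ j / (j + β) * (Nat.choose (α + 1) j))
        = (∑ k ∈ Finset.range (α + 1),
            (-x) ^ (k + 1) / ((k : ℝ) + 1 + β) * (Nat.choose (α + 1) (k + 1) : ℝ)) + 1 / β := by
      rw [Finset.sum_range_succ']
      push_cast
      norm_num
    have eB : (∑ j ∈ Finset.range (α + 2), (-x) ^ j * (Nat.choose (α + 1) j : ℝ))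
        = (∑ k ∈ Finset.range (α + 1),
            (-x) ^ (k + 1) * (Nat.choose (α + 1) (k + 1) : ℝ)) + 1 := by
      rw [Finset.sum_range_succ']
      norm_num
    rw [eS, ← hA0, eB, mul_add, Finset.mul_sum, Finset.mul_sum]
    have hterm : ∀ k ∈ Finset.range (α + 1),
        β * ((-x) ^ (k + 1) / ((k : ℝ) + 1 + β) * (Nat.choose (α + 1) (k + 1) : ℝ))
          - ((α : ℝ) + 1) * x * ((-x) ^ k / ((k : ℝ) + β + 1) * (Nat.choose α k))
          = (-x) ^ (k + 1) * (Nat.choose (α + 1) (k + 1) : ℝ) := by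
      intro k _
      have hck := hc k
      have hd : ((k : ℝ) + 1 + β) ≠ 0 := by
        have := hne1 k; intro hcon; apply this; linarith
      have hstep : β * ((-x) ^ (k + 1) / ((k : ℝ) + 1 + β) * (Nat.choose (α + 1) (k + 1) : ℝ))
            - ((α : ℝ) + 1) * x * ((-x) ^ k / ((k : ℝ) + β + 1) * (Nat.choose α k : ℝ))
          = (β * ((-x) ^ (k + 1) * (Nat.choose (α + 1) (k + 1) : ℝ))
              - ((α : ℝ) + 1) * x * ((-x) ^ k * (Nat.choose α k : ℝ))) / ((k : ℝ) + 1 + β) := by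
        rw [show (k : ℝ) + β + 1 = (k : ℝ) + 1 + β from by ring]
        ring
      rw [hstep, div_eq_iff hd]
      linear_combination ((-x) ^ (k + 1)) * hc k
    have hβ1 : β * (1 / β) = 1 := by
      rw [mul_one_div, div_self (ne_of_lt hβ0)]
    rw [hβ1, add_sub_right_comm, ← Finset.sum_sub_distrib, Finset.sum_congr rfl hterm]
  -- abbreviations
  set S0 := ∑ j ∈ Finset.range (α + 2), (-x) ^ j / (j + β) * (Nat.choose (α + 1) j) with hS0def
  set S1 := ∑ j ∈ Finset.range (α + 2), (j : ℝ) * (-x) ^ j / (j + β) * (Nat.choose (α + 1) j)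
    with hS1def
  set S2 := ∑ j ∈ Finset.range (α + 2), (j : ℝ) ^ 2 * (-x) ^ j / (j + β) * (Nat.choose (α + 1) j)
    with hS2def
  set Q := ∑ k ∈ Finset.range (α + 1), (-x) ^ k / ((k : ℝ) + β + 1) * (Nat.choose α k) with hQdef
  have hu : (1 - x) ^ (α + 1) = (1 - x) ^ α * (1 - x) := pow_succ _ _
  have key : S2 * S0 - S1 ^ 2
      = ((α : ℝ) + 1) * x * (1 - x) ^ α * ((1 - x) * Q - S0) := by
    linear_combination S0 * h2 - (S1 + (1 - x) ^ (α + 1) - β * S0) * h1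
      + (1 - x) ^ (α + 1) * h4 + (((α : ℝ) + 1) * x * Q) * hu
  have hQ : 0 ≤ Q := Q_nonneg α β x hβ hβ0 hx0 hx1
  have hV : (0 : ℝ) < (1 - x) ^ (α + 1) := pow_pos (by linarith) _
  have hS0neg : S0 < 0 := by
    have hQ' : 0 ≤ ((α : ℝ) + 1) * x * Q :=
      mul_nonneg (mul_nonneg (by positivity) hx0) hQ
    have hβS0 : 0 < β * S0 := by nlinarith
    nlinarith
  have hrhs : 0 ≤ ((α : ℝ) + 1) * x * (1 - x) ^ α * ((1 - x) * Q - S0) := by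
    apply mul_nonneg
    · exact mul_nonneg (mul_nonneg (by positivity) hx0) (pow_nonneg (by linarith) _)
    · have : 0 ≤ (1 - x) * Q := mul_nonneg (by linarith) hQ
      linarith
  linarith [key, hrhs]
end

section
/- Let α > -1, β > -1 with β = β₀ + m, m ∈ ℕ, β₀ ∈ (-1,0], and let P_{α,β} denote the orthogonal projection of L²(𝔻, dμ_{α,β}) onto the β-modified Bergman space A²_{α,β}. Then for nonnegative integers s, t with t ≥ s: P_{α,β}(z̄^s z^{t-m}) = ((α+β₀+t+2)_{-s}/(β₀+t+1)_{-s}) · z^{t-s-m}, where (a)_{-s} = Γ(a-s)/Γ(a) is the Pochhammer symbol with negative index; and for t < s, P_{α,β}(z̄^s z^{t-m}) = 0. -/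
/-- The Beta function `B(a,b) = Γ(a)Γ(b)/Γ(a+b)`. -/
noncomputable def Beta (a b : ℝ) : ℝ := Real.Gamma a * Real.Gamma b / Real.Gamma (a + b)

/-- The density of the measure `dμ_{α,β}` with respect to Lebesgue area measure. -/
noncomputable def bergWeight (α β : ℝ) (z : ℂ) : ℝ :=
  (1 / Beta (α + 1) (β + 1)) * Real.rpow ‖z‖ (2 * β) * Real.rpow (1 - ‖z‖ ^ 2) α

/-- Pochhammer symbol with negative index: `(a)_{-s} = Γ(a-s)/Γ(a)`. -/
noncomputable def pochNeg (a : ℝ) (s : ℕ) : ℝ := Real.Gamma (a - s) / Real.Gamma a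

open MeasureTheory Set Real

lemma betaReal {a b : ℝ} (ha : 0 < a) (hb : 0 < b) :
    ∫ x in Ioo (0:ℝ) 1, x ^ (a-1) * (1-x) ^ (b-1) = Beta a b := by
  have key := Complex.Gamma_mul_Gamma_eq_betaIntegral (s := (a:ℂ)) (t := (b:ℂ))
    (by simpa using ha) (by simpa using hb)
  have h1 : Complex.betaIntegral (a:ℂ) (b:ℂ)
      = ((∫ x in Ioo (0:ℝ) 1, x ^ (a-1) * (1-x) ^ (b-1) : ℝ) : ℂ) := by
    have : ((∫ x in Ioo (0:ℝ) 1, x ^ (a-1) * (1-x) ^ (b-1) : ℝ) : ℂ)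
        = ∫ x in Ioo (0:ℝ) 1, ((x ^ (a-1) * (1-x) ^ (b-1) : ℝ) : ℂ) := integral_ofReal.symm
    rw [this, ← integral_Ioc_eq_integral_Ioo, Complex.betaIntegral,
      intervalIntegral.integral_of_le zero_le_one]
    refine setIntegral_congr_fun measurableSet_Ioc (fun x hx => ?_)
    push_cast
    rw [Complex.ofReal_cpow hx.1.le, Complex.ofReal_cpow (by linarith [hx.2])]
    push_cast
    ring
  rw [h1] at key
  have h2 : Complex.Gamma (a:ℂ) = ((Real.Gamma a : ℝ) : ℂ) := Complex.Gamma_ofReal a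
  have h3 : Complex.Gamma (b:ℂ) = ((Real.Gamma b : ℝ) : ℂ) := Complex.Gamma_ofReal b
  have h4 : Complex.Gamma ((a:ℂ) + b) = ((Real.Gamma (a+b) : ℝ) : ℂ) := by
    rw [← Complex.ofReal_add]; exact Complex.Gamma_ofReal _
  rw [h2, h3, h4, ← Complex.ofReal_mul, ← Complex.ofReal_mul] at key
  have key' := Complex.ofReal_inj.mp key
  have hG : Real.Gamma (a+b) ≠ 0 := (Real.Gamma_pos_of_pos (by linarith)).ne'
  rw [Beta]
  field_simp
  linarith [key']

lemma betaIntegrable {a b : ℝ} (ha : -1 < a) (hb : -1 < b) :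
    IntegrableOn (fun x => x ^ a * (1-x) ^ b) (Ioo (0:ℝ) 1) := by
  have h := Complex.betaIntegral_convergent (u := ((a:ℝ)+1 : ℂ)) (v := ((b:ℝ)+1 : ℂ))
    (by simp; linarith) (by simp; linarith)
  have h2 : IntegrableOn (fun x : ℝ => ‖(x:ℂ) ^ ((a:ℂ)+1-1) * (1-(x:ℂ)) ^ ((b:ℂ)+1-1)‖)
      (Ioc (0:ℝ) 1) := ((h.1).norm)
  refine ((h2.mono_set Ioo_subset_Ioc_self).congr_fun (fun x hx => ?_) measurableSet_Ioo)
  have hx0 : (0:ℝ) < x := hx.1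
  have hx1 : (0:ℝ) < 1 - x := by linarith [hx.2]
  beta_reduce
  rw [norm_mul]
  have e1 : ((a:ℂ)+1-1) = ((a:ℝ):ℂ) := by push_cast; ring
  have e2 : ((b:ℂ)+1-1) = ((b:ℝ):ℂ) := by push_cast; ring
  rw [e1, e2]
  have := Complex.norm_cpow_eq_rpow_re_of_pos hx0 ((a:ℝ):ℂ)
  rw [this]
  have h1x : ((1:ℂ) - (x:ℂ)) = (((1 - x : ℝ)):ℂ) := by push_cast; ring
  rw [h1x, Complex.norm_cpow_eq_rpow_re_of_pos hx1]
  simp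

lemma diskRadial {α q₁ q₂ c : ℝ} (hα : -1 < α) (h1 : -2 < q₁) (h2 : -2 < q₂) :
    ∫ z in Metric.ball (0:ℂ) 1, ((‖z‖ ^ q₁ - c * ‖z‖ ^ q₂) * (1 - ‖z‖^2) ^ α) =
      π * (Beta (q₁/2+1) (α+1) - c * Beta (q₂/2+1) (α+1)) := by
  set g : ℝ → ℝ := fun r => (r ^ q₁ - c * r ^ q₂) * (1 - r^2) ^ α with hg
  set h : ℝ → ℝ := fun u => (u ^ (q₁/2) - c * u ^ (q₂/2)) * (1-u) ^ α with hh
  have hq1 : (-1:ℝ) < q₁/2 := by linarith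
  have hq2 : (-1:ℝ) < q₂/2 := by linarith
  have hBval : ∫ u in Ioo (0:ℝ) 1, h u
      = Beta (q₁/2+1) (α+1) - c * Beta (q₂/2+1) (α+1) := by
    have i1 : IntegrableOn (fun u : ℝ => u ^ (q₁/2) * (1-u) ^ α) (Ioo (0:ℝ) 1) :=
      betaIntegrable hq1 hα
    have i2 : IntegrableOn (fun u : ℝ => c * (u ^ (q₂/2) * (1-u) ^ α)) (Ioo (0:ℝ) 1) :=
      (betaIntegrable hq2 hα).const_mul c
    have e : ∫ u in Ioo (0:ℝ) 1, h u = ∫ u in Ioo (0:ℝ) 1,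
        ((fun u : ℝ => u ^ (q₁/2) * (1-u) ^ α) u - (fun u : ℝ => c * (u ^ (q₂/2) * (1-u) ^ α)) u) := by
      refine setIntegral_congr_fun measurableSet_Ioo (fun u hu => ?_)
      simp only [hh]; ring
    rw [e, integral_sub i1 i2, integral_const_mul]
    have b1 := betaReal (a := q₁/2+1) (b := α+1) (by linarith) (by linarith)
    have b2 := betaReal (a := q₂/2+1) (b := α+1) (by linarith) (by linarith)
    rw [show q₁/2+1-1 = q₁/2 by ring, show (α:ℝ)+1-1 = α by ring] at b1
    rw [show q₂/2+1-1 = q₂/2 by ring, show (α:ℝ)+1-1 = α by ring] at b2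
    rw [b1, b2]
  have hsub : 2 * ∫ r in Ioo (0:ℝ) 1, r * g r = ∫ u in Ioo (0:ℝ) 1, h u := by
    have key := integral_comp_rpow_Ioi (g := (Ioo (0:ℝ) 1).indicator h) (p := 2) two_ne_zero
    have lhs : ∫ x in Ioi (0:ℝ), (|(2:ℝ)| * x ^ ((2:ℝ)-1)) • (Ioo (0:ℝ) 1).indicator h (x ^ (2:ℝ))
        = ∫ x in Ioi (0:ℝ), (Ioo (0:ℝ) 1).indicator (fun r => 2 * (r * g r)) x := by
      refine setIntegral_congr_fun measurableSet_Ioi (fun x hx => ?_)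
      have hx0 : (0:ℝ) < x := hx
      by_cases hlt : x < 1
      · have hmem : x ∈ Ioo (0:ℝ) 1 := Set.mem_Ioo.mpr ⟨hx0, hlt⟩
        have hmem2 : x ^ ((2:ℝ)) ∈ Ioo (0:ℝ) 1 := by
          rw [Real.rpow_two]; exact Set.mem_Ioo.mpr ⟨by positivity, by nlinarith⟩
        rw [indicator_of_mem hmem2, indicator_of_mem hmem]
        have e1 : (x ^ ((2:ℝ))) ^ (q₁/2) = x ^ q₁ := by
          rw [← rpow_mul hx0.le, show (2:ℝ)*(q₁/2) = q₁ by ring]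
        have e2 : (x ^ ((2:ℝ))) ^ (q₂/2) = x ^ q₂ := by
          rw [← rpow_mul hx0.le, show (2:ℝ)*(q₂/2) = q₂ by ring]
        have e3 : (1 : ℝ) - x ^ ((2:ℝ)) = 1 - x^2 := by rw [Real.rpow_two]
        simp only [hh, hg, smul_eq_mul, e1, e2, e3]
        rw [show ((2:ℝ))-1 = 1 by norm_num, rpow_one, abs_of_pos (by norm_num : (0:ℝ) < 2)]
        ring
      · have hmem : x ∉ Ioo (0:ℝ) 1 := by simp [hlt]
        have hmem2 : x ^ ((2:ℝ)) ∉ Ioo (0:ℝ) 1 := by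
          rw [Real.rpow_two]; intro hc; exact hlt (by nlinarith [(Set.mem_Ioo.mp hc).2])
        rw [indicator_of_notMem hmem2, indicator_of_notMem hmem, smul_zero]
    rw [lhs] at key
    rw [setIntegral_indicator measurableSet_Ioo,
      inter_eq_self_of_subset_right Ioo_subset_Ioi_self] at key
    rw [setIntegral_indicator measurableSet_Ioo,
      inter_eq_self_of_subset_right Ioo_subset_Ioi_self] at key
    rw [← key, ← integral_const_mul]
  have hpolar : ∫ z in Metric.ball (0:ℂ) 1, g ‖z‖
      = (∫ r in Ioo (0:ℝ) 1, r * g r) * (2 * π) := by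
    rw [← integral_indicator measurableSet_ball,
      ← Complex.integral_comp_polarCoord_symm, polarCoord_target]
    have step : ∫ p in Ioi (0:ℝ) ×ˢ Ioo (-π) π,
        p.1 • (Metric.ball (0:ℂ) 1).indicator (fun z => g ‖z‖) (Complex.polarCoord.symm p)
        = ∫ p in Ioi (0:ℝ) ×ˢ Ioo (-π) π,
          ((Ioo (0:ℝ) 1).indicator (fun r => r * g r) p.1) * (fun _ : ℝ => (1:ℝ)) p.2 := by
      refine setIntegral_congr_fun (measurableSet_Ioi.prod measurableSet_Ioo) (fun p hp => ?_)
      have hp1 : (0:ℝ) < p.1 := hp.1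
      have hnorm : ‖Complex.polarCoord.symm p‖ = p.1 := by
        rw [Complex.norm_polarCoord_symm, abs_of_pos hp1]
      by_cases hlt : p.1 < 1
      · have hm : Complex.polarCoord.symm p ∈ Metric.ball (0:ℂ) 1 := by
          rw [Metric.mem_ball, dist_zero_right, hnorm]; exact hlt
        have hmem : p.1 ∈ Ioo (0:ℝ) 1 := Set.mem_Ioo.mpr ⟨hp1, hlt⟩
        rw [indicator_of_mem hm, hnorm, indicator_of_mem hmem, smul_eq_mul, mul_one]
      · have hm : Complex.polarCoord.symm p ∉ Metric.ball (0:ℂ) 1 := by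
          rw [Metric.mem_ball, dist_zero_right, hnorm]; exact fun hc => hlt hc
        have hmem : p.1 ∉ Ioo (0:ℝ) 1 := by simp [hlt]
        rw [indicator_of_notMem hm, indicator_of_notMem hmem, smul_zero, zero_mul]
    have prodeq := setIntegral_prod_mul (μ := (volume : Measure ℝ)) (ν := (volume : Measure ℝ))
      (fun r => (Ioo (0:ℝ) 1).indicator (fun r => r * g r) r) (fun _ : ℝ => (1:ℝ))
      (Ioi 0) (Ioo (-π) π)
    rw [step, Measure.volume_eq_prod, prodeq, setIntegral_indicator measurableSet_Ioo,
      inter_eq_self_of_subset_right Ioo_subset_Ioi_self]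
    simp_rw [integral_const, measureReal_restrict_apply_univ,
      Real.volume_real_Ioo, sub_neg_eq_add, ← two_mul, max_eq_left (by positivity : (0:ℝ) ≤ 2 * π),
      smul_eq_mul, mul_one]
  calc ∫ z in Metric.ball (0:ℂ) 1, ((‖z‖ ^ q₁ - c * ‖z‖ ^ q₂) * (1 - ‖z‖^2) ^ α)
      = (∫ r in Ioo (0:ℝ) 1, r * g r) * (2 * π) := hpolar
    _ = π * (2 * ∫ r in Ioo (0:ℝ) 1, r * g r) := by ring
    _ = π * (Beta (q₁/2+1) (α+1) - c * Beta (q₂/2+1) (α+1)) := by rw [hsub, hBval]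

lemma rotZero (n : ℤ) (hn : n ≠ 0) (f : ℂ → ℂ)
    (hf : ∀ (a z : ℂ), ‖a‖ = 1 → z ≠ 0 → f (a * z) = a ^ n * f z) :
    ∫ z in Metric.ball (0:ℂ) 1, f z = 0 := by
  set a : Circle := Circle.exp (π / n) with ha_def
  have ha : ‖(a:ℂ)‖ = 1 := Circle.norm_coe a
  have hnC : (n:ℂ) ≠ 0 := Int.cast_ne_zero.mpr hn
  have han : (a:ℂ) ^ n = -1 := by
    rw [ha_def, Circle.coe_exp, ← Complex.exp_int_mul,
      show ((n:ℂ) * (((π / n : ℝ) : ℂ) * Complex.I)) = (π : ℂ) * Complex.I by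
        push_cast; field_simp]
    exact Complex.exp_pi_mul_I
  have hrot := (rotation a).measurePreserving
  have hpre : ⇑(rotation a) ⁻¹' (Metric.ball (0:ℂ) 1) = Metric.ball (0:ℂ) 1 := by
    ext z
    simp only [mem_preimage, rotation_apply, Metric.mem_ball, dist_zero_right, norm_mul, ha,
      one_mul]
  have hres := hrot.restrict_preimage (s := Metric.ball (0:ℂ) 1) measurableSet_ball
  rw [hpre] at hres
  have hemb : MeasurableEmbedding (⇑(rotation a)) :=
    (rotation a).toHomeomorph.measurableEmbedding
  have I0 : ∫ z in Metric.ball (0:ℂ) 1, f ((rotation a) z)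
      = ∫ z in Metric.ball (0:ℂ) 1, f z := hres.integral_comp hemb f
  have hae : ∀ᵐ (z : ℂ) ∂(volume : Measure ℂ), z ∈ Metric.ball (0:ℂ) 1 →
      f ((rotation a) z) = (a:ℂ) ^ n * f z := by
    have h0 : ∀ᵐ (z : ℂ) ∂(volume : Measure ℂ), z ≠ 0 := by
      simp [ae_iff, Set.setOf_eq_eq_singleton', measure_singleton]
    filter_upwards [h0] with z hz _
    rw [rotation_apply]
    exact hf _ _ ha hz
  have I1 : ∫ z in Metric.ball (0:ℂ) 1, f ((rotation a) z)
      = ∫ z in Metric.ball (0:ℂ) 1, (a:ℂ) ^ n * f z := by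
    refine setIntegral_congr_ae measurableSet_ball hae
  rw [I1, integral_const_mul, han] at I0
  have : ∫ z in Metric.ball (0:ℂ) 1, f z = -∫ z in Metric.ball (0:ℂ) 1, f z := by
    linear_combination -I0
  exact add_self_eq_zero.mp (by linear_combination this)

lemma gammaIdent {α β₀ : ℝ} (hα : -1 < α) (hβ : -1 < β₀) {s t : ℕ} (hst : s ≤ t) :
    Beta ((t:ℝ)+β₀+1) (α+1)
      = (pochNeg (α+β₀+t+2) s / pochNeg (β₀+t+1) s) * Beta ((t:ℝ)-s+β₀+1) (α+1) := by
  have hts : (s:ℝ) ≤ t := Nat.cast_le.mpr hst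
  have ht0 : (0:ℝ) ≤ t := Nat.cast_nonneg t
  unfold Beta pochNeg
  rw [show (t:ℝ)+β₀+1+(α+1) = α+β₀+t+2 by ring,
    show β₀+(t:ℝ)+1-s = (t:ℝ)-s+β₀+1 by ring,
    show α+β₀+(t:ℝ)+2-s = (t:ℝ)-s+β₀+1+(α+1) by ring,
    show β₀+(t:ℝ)+1 = (t:ℝ)+β₀+1 by ring]
  have p1 : 0 < Real.Gamma ((t:ℝ)+β₀+1) := Real.Gamma_pos_of_pos (by linarith)
  have p2 : 0 < Real.Gamma (α+1) := Real.Gamma_pos_of_pos (by linarith)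
  have p3 : 0 < Real.Gamma (α+β₀+t+2) := Real.Gamma_pos_of_pos (by linarith)
  have p4 : 0 < Real.Gamma ((t:ℝ)-s+β₀+1) := Real.Gamma_pos_of_pos (by linarith)
  have p5 : 0 < Real.Gamma ((t:ℝ)-s+β₀+1+(α+1)) := Real.Gamma_pos_of_pos (by linarith)
  field_simp

lemma circle_ne_zero {a : ℂ} (ha : ‖a‖ = 1) : a ≠ 0 := by
  intro h; rw [h] at ha; simp at ha

lemma conjInv {a : ℂ} (ha : ‖a‖ = 1) : (starRingEnd ℂ) a = a⁻¹ := by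
  refine eq_inv_of_mul_eq_one_left ?_
  rw [mul_comm, Complex.mul_conj]
  norm_cast
  rw [Complex.normSq_eq_norm_sq, ha, one_pow]

lemma bergWeight_rot {α β : ℝ} {a : ℂ} (ha : ‖a‖ = 1) (z : ℂ) :
    bergWeight α β (a*z) = bergWeight α β z := by
  unfold bergWeight
  rw [norm_mul, ha, one_mul]

lemma ae_ne_zero : ∀ᵐ (z : ℂ) ∂(volume : Measure ℂ), z ≠ 0 := by
  simp [ae_iff, Set.setOf_eq_eq_singleton', measure_singleton]

/-- The projection `P_{α,β}(z̄^s z^{t-m})` equals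
`((α+β₀+t+2)_{-s}/(β₀+t+1)_{-s}) z^{t-s-m}` when `t ≥ s` and `0` when `t < s`;
expressed through orthogonality, in `L²(dμ_{α,β})`, of the difference against every
monomial `z^{k-m}` spanning the β-modified Bergman space `A²_{α,β}`. -/
theorem projection_of_monomials (α β₀ : ℝ) (m : ℕ) (hα : -1 < α)
    (hβ₀ : β₀ ∈ Set.Ioc (-1 : ℝ) 0) (s t : ℕ) :
    (s ≤ t → ∀ k : ℕ,
      ∫ z in Metric.ball (0 : ℂ) 1,
        (((starRingEnd ℂ) z) ^ s * z ^ ((t : ℤ) - m)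
            - ((pochNeg (α + β₀ + t + 2) s / pochNeg (β₀ + t + 1) s : ℝ) : ℂ)
              * z ^ ((t : ℤ) - s - m))
          * (starRingEnd ℂ) (z ^ ((k : ℤ) - m))
          * ((bergWeight α (β₀ + m) z : ℝ) : ℂ) = 0) ∧
    (t < s → ∀ k : ℕ,
      ∫ z in Metric.ball (0 : ℂ) 1,
        ((starRingEnd ℂ) z) ^ s * z ^ ((t : ℤ) - m)
          * (starRingEnd ℂ) (z ^ ((k : ℤ) - m))
          * ((bergWeight α (β₀ + m) z : ℝ) : ℂ) = 0) := by
  obtain ⟨hβ₀l, _hβ₀r⟩ := hβ₀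
  set C : ℝ := pochNeg (α + β₀ + t + 2) s / pochNeg (β₀ + t + 1) s with hCdef
  constructor
  · intro hst k
    by_cases hk : (k : ℤ) = (t : ℤ) - s
    · -- radial case
      set q₁ : ℝ := 2 * ((t:ℝ) + β₀) with hq₁def
      set q₂ : ℝ := 2 * ((t:ℝ) - s + β₀) with hq₂def
      have hq₁ : (-2:ℝ) < q₁ := by
        have : (0:ℝ) ≤ t := Nat.cast_nonneg t
        rw [hq₁def]; linarith
      have hq₂ : (-2:ℝ) < q₂ := by
        have : (s:ℝ) ≤ t := Nat.cast_le.mpr hst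
        rw [hq₂def]; linarith
      have hcong : ∫ z in Metric.ball (0 : ℂ) 1,
          (((starRingEnd ℂ) z) ^ s * z ^ ((t : ℤ) - m)
              - ((C : ℝ) : ℂ) * z ^ ((t : ℤ) - s - m))
            * (starRingEnd ℂ) (z ^ ((k : ℤ) - m))
            * ((bergWeight α (β₀ + m) z : ℝ) : ℂ)
          = ∫ z in Metric.ball (0 : ℂ) 1,
            ((((1 / Beta (α+1) (β₀ + m + 1)) *
              ((‖z‖ ^ q₁ - C * ‖z‖ ^ q₂) * (1 - ‖z‖^2) ^ α)) : ℝ) : ℂ) := by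
        refine setIntegral_congr_ae measurableSet_ball ?_
        filter_upwards [ae_ne_zero] with z hz _hball
        have hz' : (starRingEnd ℂ) z ≠ 0 := by simpa using hz
        have hx : (0:ℝ) < ‖z‖ := norm_pos_iff.mpr hz
        have hcz : (starRingEnd ℂ) z * z = ((‖z‖^2 : ℝ) : ℂ) := by
          rw [mul_comm, Complex.mul_conj]
          norm_cast
          rw [Complex.normSq_eq_norm_sq]
        rw [hk]
        have k1 : ((starRingEnd ℂ) z)^s * ((starRingEnd ℂ) z)^((t:ℤ)-s-m)
            = ((starRingEnd ℂ) z)^((t:ℤ)-m) := by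
          rw [← zpow_natCast ((starRingEnd ℂ) z) s, ← zpow_add₀ hz']
          congr 1; omega
        have k2 : ((starRingEnd ℂ) z)^((t:ℤ)-m) * z^((t:ℤ)-m)
            = (((‖z‖^2 : ℝ) : ℂ))^((t:ℤ)-m) := by rw [← mul_zpow, hcz]
        have k3 : z^((t:ℤ)-s-m) * ((starRingEnd ℂ) z)^((t:ℤ)-s-m)
            = (((‖z‖^2 : ℝ) : ℂ))^((t:ℤ)-s-m) := by rw [← mul_zpow, mul_comm z, hcz]
        have stepA : (((starRingEnd ℂ) z) ^ s * z ^ ((t : ℤ) - m)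
              - ((C : ℝ) : ℂ) * z ^ ((t : ℤ) - s - m))
            * (starRingEnd ℂ) (z ^ ((t : ℤ) - s - m))
            * ((bergWeight α (β₀ + m) z : ℝ) : ℂ)
            = (((‖z‖^2 : ℝ) : ℂ))^((t:ℤ)-m) * ((bergWeight α (β₀ + m) z : ℝ) : ℂ)
              - ((C : ℝ) : ℂ) * ((((‖z‖^2 : ℝ) : ℂ))^((t:ℤ)-s-m)
                * ((bergWeight α (β₀ + m) z : ℝ) : ℂ)) := by
          rw [map_zpow₀]
          linear_combination (z^((t:ℤ)-m) * ((bergWeight α (β₀ + m) z : ℝ) : ℂ)) * k1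
            + ((bergWeight α (β₀ + m) z : ℝ) : ℂ) * k2
            - ((C : ℝ) : ℂ) * ((bergWeight α (β₀ + m) z : ℝ) : ℂ) * k3
        rw [stepA, ← Complex.ofReal_zpow, ← Complex.ofReal_zpow, ← Complex.ofReal_mul,
          ← Complex.ofReal_mul, ← Complex.ofReal_mul, ← Complex.ofReal_sub]
        congr 1
        -- real identity
        have r1 : (‖z‖^2 : ℝ)^((t:ℤ)-(m:ℤ)) * Real.rpow ‖z‖ (2*(β₀+m)) = ‖z‖ ^ q₁ := by
          rw [Real.rpow_eq_pow, ← Real.rpow_intCast (‖z‖^2) ((t:ℤ)-(m:ℤ)), ← Real.rpow_two,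
            ← Real.rpow_mul hx.le, ← Real.rpow_add hx]
          congr 1
          rw [hq₁def]; push_cast; ring
        have r2 : (‖z‖^2 : ℝ)^((t:ℤ)-(s:ℤ)-(m:ℤ)) * Real.rpow ‖z‖ (2*(β₀+m)) = ‖z‖ ^ q₂ := by
          rw [Real.rpow_eq_pow, ← Real.rpow_intCast (‖z‖^2) ((t:ℤ)-(s:ℤ)-(m:ℤ)), ← Real.rpow_two,
            ← Real.rpow_mul hx.le, ← Real.rpow_add hx]
          congr 1
          rw [hq₂def]; push_cast; ring
        unfold bergWeight
        linear_combination ((1 / Beta (α+1) (β₀ + m + 1)) * Real.rpow (1-‖z‖^2) α) * r1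
          - C * ((1 / Beta (α+1) (β₀ + m + 1)) * Real.rpow (1-‖z‖^2) α) * r2
      have hoR : ∫ z in Metric.ball (0:ℂ) 1,
          ((((1 / Beta (α+1) (β₀ + m + 1)) *
            ((‖z‖ ^ q₁ - C * ‖z‖ ^ q₂) * (1 - ‖z‖^2) ^ α)) : ℝ) : ℂ)
          = ((∫ z in Metric.ball (0:ℂ) 1,
            (1 / Beta (α+1) (β₀ + m + 1)) *
            ((‖z‖ ^ q₁ - C * ‖z‖ ^ q₂) * (1 - ‖z‖^2) ^ α) : ℝ) : ℂ) := integral_ofReal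
      rw [hcong, hoR, integral_const_mul, diskRadial hα hq₁ hq₂,
        show q₁/2+1 = (t:ℝ)+β₀+1 by rw [hq₁def]; ring,
        show q₂/2+1 = (t:ℝ)-s+β₀+1 by rw [hq₂def]; ring,
        gammaIdent hα hβ₀l hst, ← hCdef]
      simp
    · -- rotation case
      refine rotZero ((t:ℤ) - s - k) (by omega) _ ?_
      intro a z ha hz
      have ha0 : a ≠ 0 := circle_ne_zero ha
      have hca : (starRingEnd ℂ) a = a⁻¹ := conjInv ha
      rw [bergWeight_rot ha]
      simp only [map_mul, mul_pow, mul_zpow, map_zpow₀, hca, inv_pow, inv_zpow, ← zpow_natCast a,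
        ← zpow_neg]
      have A1 : a^(-(s:ℤ)) * a^((t:ℤ)-m) * a^(-((k:ℤ)-m)) = a^((t:ℤ) - s - k) := by
        rw [← zpow_add₀ ha0, ← zpow_add₀ ha0]; congr 1; omega
      have A2 : a^((t:ℤ)-s-m) * a^(-((k:ℤ)-m)) = a^((t:ℤ) - s - k) := by
        rw [← zpow_add₀ ha0]; congr 1; omega
      linear_combination (((starRingEnd ℂ) z)^s * z^((t:ℤ)-m) * ((starRingEnd ℂ) z)^((k:ℤ)-m)
          * ((bergWeight α (β₀ + m) z : ℝ) : ℂ)) * A1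
        - (((C : ℝ) : ℂ) * z^((t:ℤ)-s-m) * ((starRingEnd ℂ) z)^((k:ℤ)-m)
          * ((bergWeight α (β₀ + m) z : ℝ) : ℂ)) * A2
  · intro hts k
    refine rotZero ((t:ℤ) - s - k) (by omega) _ ?_
    intro a z ha hz
    have ha0 : a ≠ 0 := circle_ne_zero ha
    have hca : (starRingEnd ℂ) a = a⁻¹ := conjInv ha
    rw [bergWeight_rot ha]
    simp only [map_mul, mul_pow, mul_zpow, map_zpow₀, hca, inv_pow, inv_zpow, ← zpow_natCast a,
      ← zpow_neg]
    have A1 : a^(-(s:ℤ)) * a^((t:ℤ)-m) * a^(-((k:ℤ)-m)) = a^((t:ℤ) - s - k) := by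
      rw [← zpow_add₀ ha0, ← zpow_add₀ ha0]; congr 1; omega
    linear_combination (((starRingEnd ℂ) z)^s * z^((t:ℤ)-m) * ((starRingEnd ℂ) z)^((k:ℤ)-m)
        * ((bergWeight α (β₀ + m) z : ℝ) : ℂ)) * A1
end

section
/- Let μ be the measure dμ_{α,β} = (1/B(α+1,β+1))|z|^{2β}(1-|z|²)^α dA(z) on the unit disk, with α > -1, β ∈ (-1,0], β ∈ 𝒥_α, and let ν be a finite positive Borel measure on 𝔻. Suppose there exists C > 0 such that ∫|f| dν ≤ C ∫|f| dμ_{α,β} for all f ∈ A¹_{α,β} (ν is a Carleson measure). Then the Toeplitz operator T_ν f(z) = ∫_𝔻 f(w)·conj(K_{α,β}(w,z)) dν(w) is bounded on A²_{α,β}: specifically, for all f, g ∈ A²_{α,β}, |⟨T_ν f, g⟩_{α,β}| ≤ C·‖f‖_{α,β,2}·‖g‖_{α,β,2}. -/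
open MeasureTheory

/-- Membership in the β-modified Bergman space `A^p_{α,β}`: holomorphic on the punctured
disk and `|f|^p` integrable against `dμ_{α,β}`. -/
def MemA (p α β : ℝ) (f : ℂ → ℂ) : Prop :=
  DifferentiableOn ℂ f (Metric.ball (0 : ℂ) 1 \ {0}) ∧
    IntegrableOn (fun z => ‖f z‖ ^ p * bergWeight α β z) (Metric.ball (0 : ℂ) 1) volume

lemma bergWeight_nonneg_on (α β : ℝ) (hα : -1 < α) (hβ : β ∈ Set.Ioc (-1 : ℝ) 0)
    {z : ℂ} (hz : z ∈ Metric.ball (0 : ℂ) 1) : 0 ≤ bergWeight α β z := by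
  have hB : 0 < Beta (α + 1) (β + 1) := by
    unfold Beta
    have h1 : 0 < Real.Gamma (α + 1) := Real.Gamma_pos_of_pos (by linarith)
    have h2 : 0 < Real.Gamma (β + 1) := Real.Gamma_pos_of_pos (by linarith [hβ.1])
    have h3 : 0 < Real.Gamma (α + 1 + (β + 1)) := Real.Gamma_pos_of_pos (by linarith [hβ.1])
    positivity
  unfold bergWeight
  have h1 : (0:ℝ) ≤ Real.rpow ‖z‖ (2 * β) := Real.rpow_nonneg (norm_nonneg z) _
  have h2 : (0:ℝ) ≤ Real.rpow (1 - ‖z‖ ^ 2) α := by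
    apply Real.rpow_nonneg
    have : ‖z‖ < 1 := by simpa [Metric.mem_ball] using hz
    nlinarith [norm_nonneg z]
  positivity

theorem toeplitz_bounded_of_carleson (α β : ℝ) (hα : -1 < α) (hβ : β ∈ Set.Ioc (-1 : ℝ) 0)
    (ν : Measure ℂ) [IsFiniteMeasure ν] (C : ℝ) (hC : 0 < C)
    (hCar : ∀ f : ℂ → ℂ, MemA 1 α β f →
      (∫ z in Metric.ball (0 : ℂ) 1, ‖f z‖ ∂ν)
        ≤ C * ∫ z in Metric.ball (0 : ℂ) 1, ‖f z‖ * bergWeight α β z) :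
    ∀ f g : ℂ → ℂ, MemA 2 α β f → MemA 2 α β g →
      ‖∫ z in Metric.ball (0 : ℂ) 1, f z * (starRingEnd ℂ) (g z) ∂ν‖
        ≤ C * Real.sqrt (∫ z in Metric.ball (0 : ℂ) 1, ‖f z‖ ^ 2 * bergWeight α β z)
            * Real.sqrt (∫ z in Metric.ball (0 : ℂ) 1, ‖g z‖ ^ 2 * bergWeight α β z) := by
  intro f g hf hg
  set B : Set ℂ := Metric.ball (0 : ℂ) 1 with hBdef
  set w : ℂ → ℝ := bergWeight α β with hwdef
  have hBmeas : MeasurableSet B := measurableSet_ball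
  have hwnn : ∀ z ∈ B, 0 ≤ w z := fun z hz => bergWeight_nonneg_on α β hα hβ hz
  have hwae : ∀ᵐ z ∂(volume.restrict B), 0 ≤ w z := (ae_restrict_iff' hBmeas).2 (ae_of_all _ hwnn)
  -- measurability of f and g on the ball
  have hrestr : volume.restrict (B \ {0}) = volume.restrict B :=
    Measure.restrict_congr_set (diff_null_ae_eq_self (by simp))
  have hfm : AEStronglyMeasurable f (volume.restrict B) := by
    rw [← hrestr]
    exact hf.1.continuousOn.aestronglyMeasurable (hBmeas.diff (measurableSet_singleton 0))
  have hgm : AEStronglyMeasurable g (volume.restrict B) := by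
    rw [← hrestr]
    exact hg.1.continuousOn.aestronglyMeasurable (hBmeas.diff (measurableSet_singleton 0))
  have hwcont : ContinuousOn w (B \ {0}) := by
    apply ContinuousOn.mul
    apply ContinuousOn.mul continuousOn_const
    · exact (continuous_norm.continuousOn).rpow_const
        (fun z hz => Or.inl (norm_ne_zero_iff.2 (by simpa using hz.2)))
    · exact ((continuous_const.sub ((continuous_norm).pow 2)).continuousOn).rpow_const
        (fun z hz => Or.inl (by
          have : ‖z‖ < 1 := mem_ball_zero_iff.1 hz.1
          show (1:ℝ) - ‖z‖ ^ 2 ≠ 0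
          nlinarith [norm_nonneg z]))
  have hwm : AEStronglyMeasurable w (volume.restrict B) := by
    rw [← hrestr]
    exact hwcont.aestronglyMeasurable (hBmeas.diff (measurableSet_singleton 0))
  have hwsqrtm : AEStronglyMeasurable (fun z => Real.sqrt (w z)) (volume.restrict B) :=
    Real.continuous_sqrt.comp_aestronglyMeasurable hwm
  -- integrability of |f|^2 w and |g|^2 w (with natural power)
  have hfint : IntegrableOn (fun z => ‖f z‖ ^ 2 * w z) B volume := by
    have := hf.2
    refine this.congr_fun (fun z _ => ?_) hBmeas
    beta_reduce
    rw [show ((2:ℝ)) = ((2:ℕ):ℝ) by norm_num, Real.rpow_natCast]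
  have hgint : IntegrableOn (fun z => ‖g z‖ ^ 2 * w z) B volume := by
    have := hg.2
    refine this.congr_fun (fun z _ => ?_) hBmeas
    beta_reduce
    rw [show ((2:ℝ)) = ((2:ℕ):ℝ) by norm_num, Real.rpow_natCast]
  -- the product f*g is in A^1
  have hfg : MemA 1 α β (fun z => f z * g z) := by
    constructor
    · exact hf.1.mul hg.1
    · have hmaj : IntegrableOn (fun z => ‖f z‖ ^ 2 * w z + ‖g z‖ ^ 2 * w z) B volume :=
        hfint.add hgint
      have hprod : IntegrableOn (fun z => ‖f z * g z‖ * w z) B volume := by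
        refine Integrable.mono hmaj ((hfm.mul hgm).norm.mul hwm) ?_
        filter_upwards [hwae] with z hwz
        rw [Real.norm_of_nonneg, Real.norm_of_nonneg]
        · rw [norm_mul]
          nlinarith [mul_nonneg (sq_nonneg (‖f z‖ - ‖g z‖)) hwz,
            mul_nonneg (mul_nonneg (norm_nonneg (f z)) (norm_nonneg (g z))) hwz]
        · positivity
        · positivity
      exact hprod.congr_fun (fun z _ => by rw [Real.rpow_one]) hBmeas
  -- Cauchy-Schwarz on the weighted space
  have hFm : AEStronglyMeasurable (fun z => ‖f z‖ * Real.sqrt (w z)) (volume.restrict B) :=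
    hfm.norm.mul hwsqrtm
  have hGm : AEStronglyMeasurable (fun z => ‖g z‖ * Real.sqrt (w z)) (volume.restrict B) :=
    hgm.norm.mul hwsqrtm
  have hFsq : (fun z => (‖f z‖ * Real.sqrt (w z)) ^ 2) =ᵐ[volume.restrict B]
      (fun z => ‖f z‖ ^ 2 * w z) := by
    filter_upwards [hwae] with z hwz
    rw [mul_pow, Real.sq_sqrt hwz]
  have hGsq : (fun z => (‖g z‖ * Real.sqrt (w z)) ^ 2) =ᵐ[volume.restrict B]
      (fun z => ‖g z‖ ^ 2 * w z) := by
    filter_upwards [hwae] with z hwz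
    rw [mul_pow, Real.sq_sqrt hwz]
  have hFmem : MemLp (fun z => ‖f z‖ * Real.sqrt (w z)) 2 (volume.restrict B) := by
    rw [memLp_two_iff_integrable_sq hFm]
    exact (hfint.congr hFsq.symm)
  have hGmem : MemLp (fun z => ‖g z‖ * Real.sqrt (w z)) 2 (volume.restrict B) := by
    rw [memLp_two_iff_integrable_sq hGm]
    exact (hgint.congr hGsq.symm)
  have hconj : Real.HolderConjugate 2 2 := Real.HolderConjugate.two_two
  have hCS0 := integral_mul_le_Lp_mul_Lq_of_nonneg (μ := volume.restrict B) hconj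
    (f := fun z => ‖f z‖ * Real.sqrt (w z)) (g := fun z => ‖g z‖ * Real.sqrt (w z))
    (ae_of_all _ fun z => by positivity) (ae_of_all _ fun z => by positivity)
    (by simpa using hFmem) (by simpa using hGmem)
  have hCS : (∫ z in B, ‖f z * g z‖ * w z)
      ≤ Real.sqrt (∫ z in B, ‖f z‖ ^ 2 * w z) * Real.sqrt (∫ z in B, ‖g z‖ ^ 2 * w z) := by
    have e1 : (∫ z in B, ‖f z * g z‖ * w z)
        = ∫ z in B, (‖f z‖ * Real.sqrt (w z)) * (‖g z‖ * Real.sqrt (w z)) := by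
      refine integral_congr_ae ?_
      filter_upwards [hwae] with z hwz
      rw [norm_mul]
      rw [show (‖f z‖ * Real.sqrt (w z)) * (‖g z‖ * Real.sqrt (w z))
        = ‖f z‖ * ‖g z‖ * (Real.sqrt (w z) * Real.sqrt (w z)) by ring,
        Real.mul_self_sqrt hwz]
    have e2 : (∫ z in B, (‖f z‖ * Real.sqrt (w z)) ^ (2:ℝ)) = ∫ z in B, ‖f z‖ ^ 2 * w z := by
      refine integral_congr_ae ?_
      filter_upwards [hFsq] with z hz
      rw [show ((2:ℝ)) = ((2:ℕ):ℝ) by norm_num, Real.rpow_natCast, hz]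
    have e3 : (∫ z in B, (‖g z‖ * Real.sqrt (w z)) ^ (2:ℝ)) = ∫ z in B, ‖g z‖ ^ 2 * w z := by
      refine integral_congr_ae ?_
      filter_upwards [hGsq] with z hz
      rw [show ((2:ℝ)) = ((2:ℕ):ℝ) by norm_num, Real.rpow_natCast, hz]
    rw [e1]
    calc ∫ z in B, (‖f z‖ * Real.sqrt (w z)) * (‖g z‖ * Real.sqrt (w z))
        ≤ (∫ z in B, (‖f z‖ * Real.sqrt (w z)) ^ (2:ℝ)) ^ ((1:ℝ)/2)
          * (∫ z in B, (‖g z‖ * Real.sqrt (w z)) ^ (2:ℝ)) ^ ((1:ℝ)/2) := hCS0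
      _ = _ := by rw [e2, e3, ← Real.sqrt_eq_rpow, ← Real.sqrt_eq_rpow]
  -- main chain
  calc ‖∫ z in B, f z * (starRingEnd ℂ) (g z) ∂ν‖
      ≤ ∫ z in B, ‖f z * (starRingEnd ℂ) (g z)‖ ∂ν := norm_integral_le_integral_norm _
    _ = ∫ z in B, ‖(fun z => f z * g z) z‖ ∂ν := by
        refine integral_congr_ae (ae_of_all _ fun z => ?_)
        simp [norm_mul]
    _ ≤ C * ∫ z in B, ‖(fun z => f z * g z) z‖ * w z := hCar _ hfg
    _ ≤ C * (Real.sqrt (∫ z in B, ‖f z‖ ^ 2 * w z) * Real.sqrt (∫ z in B, ‖g z‖ ^ 2 * w z)) := by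
        exact mul_le_mul_of_nonneg_left hCS hC.le
    _ = _ := by ring
end
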